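/- Let T be a closed triangulated surface with at most 11 vertices and let (G, D, {D₁,…,Dₙ}) be a minimal decomposition of T. Then the genus-surface G has either 1 or 2 boundary components. -/

import Mathlib

namespace Tri

/-- A (pure 2-dimensional) simplicial complex, given by its set of triangles
(each triangle is a 3-element finset of vertex labels). -/
abbrev Complex := Finset (Finset ℕ)

/-- The vertices of a complex. -/
def vertices (K : Complex) : Finset ℕ := K.biUnion id

/-- The edges of a complex: 2-element subsets of triangles. -/
def edges (K : Complex) : Finset (Finset ℕ) := K.biUnion fun t => t.powersetCard 2

/-- The valence of a vertex: the number of triangles containing it. -/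
def valence (K : Complex) (v : ℕ) : ℕ := (K.filter (fun t => v ∈ t)).card

/-- The maximal vertex-valence of a complex. -/
def mv (K : Complex) : ℕ := (vertices K).sup (valence K)

/-- Euler characteristic V - E + T. -/
def eulerChar (K : Complex) : ℤ :=
  ((vertices K).card : ℤ) - (edges K).card + K.card

/-- Two triangles of `K` both containing `v` and sharing an edge. -/
def adjAt (K : Complex) (v : ℕ) (t₁ t₂ : Finset ℕ) : Prop :=
  t₁ ∈ K ∧ t₂ ∈ K ∧ v ∈ t₁ ∧ v ∈ t₂ ∧ (t₁ ∩ t₂).card = 2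

/-- Two triangles of `K` sharing an edge. -/
def adj (K : Complex) (t₁ t₂ : Finset ℕ) : Prop :=
  t₁ ∈ K ∧ t₂ ∈ K ∧ (t₁ ∩ t₂).card = 2

/-- A triangulation of a connected compact surface, possibly with boundary:
every triangle has 3 vertices, every edge lies in at most two triangles,
the triangles around every vertex are connected via edges through that vertex
(so every vertex link is a path or a circle), and the complex is connected. -/
structure IsSurface (K : Complex) : Prop where
  nonempty : K.Nonempty
  card3 : ∀ t ∈ K, t.card = 3
  edge_le : ∀ e ∈ edges K, (K.filter (fun t => e ⊆ t)).card ≤ 2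
  link_conn : ∀ v, ∀ t₁ ∈ K, ∀ t₂ ∈ K, v ∈ t₁ → v ∈ t₂ →
    Relation.ReflTransGen (adjAt K v) t₁ t₂
  conn : ∀ t₁ ∈ K, ∀ t₂ ∈ K, Relation.ReflTransGen (adj K) t₁ t₂

/-- A triangulation of a closed (connected compact) surface: every edge lies
in exactly two triangles. -/
def IsClosedSurface (K : Complex) : Prop :=
  IsSurface K ∧ ∀ e ∈ edges K, (K.filter (fun t => e ⊆ t)).card = 2

/-- Boundary edges: edges lying in exactly one triangle. -/
def bdryEdges (K : Complex) : Finset (Finset ℕ) :=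
  (edges K).filter (fun e => (K.filter (fun t => e ⊆ t)).card = 1)

/-- Boundary vertices. -/
def bdryVertices (K : Complex) : Finset ℕ := (bdryEdges K).biUnion id

/-- Interior vertices. -/
def intVertices (K : Complex) : Finset ℕ := vertices K \ bdryVertices K

/-- A triangulated disc: a connected compact surface with nonempty boundary and
Euler characteristic 1. -/
def IsDisc (K : Complex) : Prop :=
  IsSurface K ∧ eulerChar K = 1 ∧ (bdryEdges K).Nonempty

/-- Two edges sharing a vertex. -/
def edgeAdj (E : Complex) (e₁ e₂ : Finset ℕ) : Prop :=
  e₁ ∈ E ∧ e₂ ∈ E ∧ (e₁ ∩ e₂).Nonempty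

/-- A set of edges forming a triangulated circle. -/
def IsCircle (E : Complex) : Prop :=
  E.Nonempty ∧ (∀ e ∈ E, e.card = 2) ∧
  (∀ v ∈ E.biUnion id, (E.filter (fun e => v ∈ e)).card = 2) ∧
  ∀ e₁ ∈ E, ∀ e₂ ∈ E, Relation.ReflTransGen (edgeAdj E) e₁ e₂

/-- Simplicial isomorphism (re-labeling). -/
def Iso (K₁ K₂ : Complex) : Prop :=
  ∃ f : ℕ → ℕ, Set.InjOn f (vertices K₁) ∧ K₁.image (Finset.image f) = K₂

/-- The boundary of the tetrahedron. -/
def tetra : Complex := {{1,2,3},{1,2,4},{1,3,4},{2,3,4}}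

/-- The boundary of the octahedron. -/
def octa : Complex := {{1,2,3},{1,2,4},{1,3,5},{1,4,5},{2,3,6},{2,4,6},{3,5,6},{4,5,6}}

/-- The vertices of the link of a vertex. -/
def linkV (K : Complex) (v : ℕ) : Finset ℕ :=
  ((K.filter (fun t => v ∈ t)).biUnion id).erase v

/-- The result of the inverse T-move removing the vertex `v`. -/
def invT (K : Complex) (v : ℕ) : Complex :=
  insert (linkV K v) (K.filter (fun t => v ∉ t))

/-- `K'` is obtained from `K` by an inverse T-move: a 3-valent vertex whose
link does not bound a triangle is removed. -/
def InvTStep (K K' : Complex) : Prop :=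
  ∃ v, valence K v = 3 ∧ linkV K v ∉ K ∧ K' = invT K v

/-- A root: a closed triangulated surface admitting no inverse T-move. -/
def IsRoot (K : Complex) : Prop := IsClosedSurface K ∧ ∀ K', ¬ InvTStep K K'

/-- `R` is a root of `K`: obtained from `K` by inverse T-moves, with no
further inverse T-move applicable. -/
def IsRootOf (R K : Complex) : Prop :=
  Relation.ReflTransGen InvTStep K R ∧ ∀ R', ¬ InvTStep R R'

/-- The directed edges of an ordered triangle. -/
def dedges (p : ℕ × ℕ × ℕ) : Finset (ℕ × ℕ) := {(p.1, p.2.1), (p.2.1, p.2.2), (p.2.2, p.1)}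

/-- Orientability: a coherent choice of cyclic orders on the triangles,
i.e. no directed edge is shared by two distinct triangles. -/
def Orientable (K : Complex) : Prop :=
  ∃ o : Finset ℕ → ℕ × ℕ × ℕ,
    (∀ t ∈ K, ({(o t).1, (o t).2.1, (o t).2.2} : Finset ℕ) = t) ∧
    ∀ t₁ ∈ K, ∀ t₂ ∈ K, t₁ ≠ t₂ → ∀ p ∈ dedges (o t₁), p ∉ dedges (o t₂)

/-- Two closed triangulated surfaces triangulate the same surface iff they
have the same Euler characteristic and the same orientability. -/
def SameSurface (K₁ K₂ : Complex) : Prop :=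
  eulerChar K₁ = eulerChar K₂ ∧ (Orientable K₁ ↔ Orientable K₂)

/-- The intersection of two subcomplexes is a triangulated circle or empty. -/
def CircleInter (A B : Complex) : Prop :=
  (IsCircle (edges A ∩ edges B) ∨ edges A ∩ edges B = ∅) ∧
  vertices A ∩ vertices B = (edges A ∩ edges B).biUnion id

/-- A decomposition `(G, D, Ds)` of a closed triangulated surface `K`. -/
structure IsDecomp (K G D : Complex) (Ds : Finset Complex) : Prop where
  closed : IsClosedSurface K
  subG : G ⊆ K
  subD : D ⊆ K
  subDs : ∀ Di ∈ Ds, Di ⊆ K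
  surfG : IsSurface G
  discD : IsDisc D
  discDs : ∀ Di ∈ Ds, IsDisc Di
  maxv : ∃ v ∈ intVertices D, valence K v = mv K
  cover : G ∪ D ∪ Ds.sup id = K
  disjGD : Disjoint G D
  disjGDs : ∀ Di ∈ Ds, Disjoint G Di
  disjDDs : ∀ Di ∈ Ds, Disjoint D Di
  disjDsDs : ∀ Di ∈ Ds, ∀ Dj ∈ Ds, Di ≠ Dj → Disjoint Di Dj
  interGD : CircleInter G D
  interGDs : ∀ Di ∈ Ds, CircleInter G Di
  interDDs : ∀ Di ∈ Ds, CircleInter D Di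
  interDsDs : ∀ Di ∈ Ds, ∀ Dj ∈ Ds, Di ≠ Dj → CircleInter Di Dj

/-- A minimal decomposition: the genus-surface has the fewest triangles. -/
def IsMinDecomp (K G D : Complex) (Ds : Finset Complex) : Prop :=
  IsDecomp K G D Ds ∧ ∀ G' D' Ds', IsDecomp K G' D' Ds' → G.card ≤ G'.card

/- ## basic lemmas -/

lemma mem_vertices {K : Complex} {v : ℕ} : v ∈ vertices K ↔ ∃ t ∈ K, v ∈ t := by
  simp [vertices]

lemma mem_edges {K : Complex} {e : Finset ℕ} :
    e ∈ edges K ↔ ∃ t ∈ K, e ⊆ t ∧ e.card = 2 := by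
  simp only [edges, Finset.mem_biUnion, Finset.mem_powersetCard]

lemma edges_card2 {K : Complex} {e : Finset ℕ} (he : e ∈ edges K) : e.card = 2 :=
  (mem_edges.1 he).choose_spec.2.2

lemma vertices_mono {K K' : Complex} (h : K ⊆ K') : vertices K ⊆ vertices K' := by
  intro v hv; rcases mem_vertices.1 hv with ⟨t, ht, hvt⟩
  exact mem_vertices.2 ⟨t, h ht, hvt⟩

lemma edges_mono {K K' : Complex} (h : K ⊆ K') : edges K ⊆ edges K' := by
  intro e he; rcases mem_edges.1 he with ⟨t, ht, h1, h2⟩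
  exact mem_edges.2 ⟨t, h ht, h1, h2⟩

lemma edge_vertices_sub {K : Complex} {e : Finset ℕ} (he : e ∈ edges K) :
    e ⊆ vertices K := by
  rcases mem_edges.1 he with ⟨t, ht, h1, _⟩
  exact fun x hx => mem_vertices.2 ⟨t, ht, h1 hx⟩

lemma pair_mem_edges {K : Complex} {t : Finset ℕ} {x y : ℕ} (ht : t ∈ K)
    (hx : x ∈ t) (hy : y ∈ t) (hxy : x ≠ y) : ({x, y} : Finset ℕ) ∈ edges K := by
  refine mem_edges.2 ⟨t, ht, ?_, ?_⟩
  · intro z hz; simp at hz; rcases hz with rfl | rfl <;> assumption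
  · rw [Finset.card_insert_of_notMem (by simp [hxy]), Finset.card_singleton]

lemma sub_mem_edges {K : Complex} {t e : Finset ℕ} (ht : t ∈ K) (het : e ⊆ t)
    (he2 : e.card = 2) : e ∈ edges K := mem_edges.2 ⟨t, ht, het, he2⟩

/-- the two triangles of an edge in a closed surface -/
lemma two_tris {K : Complex} (hK : IsClosedSurface K) {x y : ℕ} {A B : Finset ℕ}
    (hA : A ∈ K) (hB : B ∈ K) (hAB : A ≠ B) (hxy : x ≠ y)
    (hxA : x ∈ A) (hyA : y ∈ A) (hxB : x ∈ B) (hyB : y ∈ B) :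
    ∀ s ∈ K, x ∈ s → y ∈ s → s = A ∨ s = B := by
  intro s hs hxs hys
  have he : ({x, y} : Finset ℕ) ∈ edges K := pair_mem_edges hA hxA hyA hxy
  have h2 := hK.2 _ he
  have hsub : ({A, B} : Finset (Finset ℕ)) ⊆ K.filter (fun t => ({x,y} : Finset ℕ) ⊆ t) := by
    intro u hu; simp at hu
    rcases hu with rfl | rfl <;> simp [Finset.mem_filter, hA, hB, Finset.insert_subset_iff, *]
  have hcard : ({A, B} : Finset (Finset ℕ)).card = 2 := by
    rw [Finset.card_insert_of_notMem (by simp [hAB]), Finset.card_singleton]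
  have heq : K.filter (fun t => ({x,y} : Finset ℕ) ⊆ t) = {A, B} :=
    (Finset.eq_of_subset_of_card_le hsub (by omega)).symm
  have : s ∈ K.filter (fun t => ({x,y} : Finset ℕ) ⊆ t) := by
    simp [Finset.mem_filter, hs, Finset.insert_subset_iff, hxs, hys]
  rw [heq] at this; simpa using this

/-- existence of the other triangle of an edge -/
lemma other_tri {K : Complex} (hK : IsClosedSurface K) {x y : ℕ} {A : Finset ℕ}
    (hA : A ∈ K) (hxy : x ≠ y) (hxA : x ∈ A) (hyA : y ∈ A) :
    ∃ B ∈ K, B ≠ A ∧ x ∈ B ∧ y ∈ B := by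
  have he : ({x, y} : Finset ℕ) ∈ edges K := pair_mem_edges hA hxA hyA hxy
  have h2 := hK.2 _ he
  have hAf : A ∈ K.filter (fun t => ({x,y} : Finset ℕ) ⊆ t) := by
    simp [Finset.mem_filter, hA, Finset.insert_subset_iff, hxA, hyA]
  have : ∃ B ∈ K.filter (fun t => ({x,y} : Finset ℕ) ⊆ t), B ≠ A := by
    by_contra hc; push_neg at hc
    have : K.filter (fun t => ({x,y} : Finset ℕ) ⊆ t) ⊆ {A} := fun u hu => by
      simp [hc u hu]
    have := Finset.card_le_card this; simp [h2] at this
  rcases this with ⟨B, hB, hBA⟩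
  simp [Finset.mem_filter, Finset.insert_subset_iff] at hB
  exact ⟨B, hB.1, hBA, hB.2.1, hB.2.2⟩

/-- shape of a triangle containing a given vertex -/
lemma triangle_shape {K : Complex} (hs : ∀ t ∈ K, t.card = 3) {t : Finset ℕ} {v : ℕ}
    (ht : t ∈ K) (hv : v ∈ t) :
    ∃ a b, a ≠ b ∧ v ≠ a ∧ v ≠ b ∧ t = {v, a, b} := by
  have h3 := hs t ht
  have : (t.erase v).card = 2 := by rw [Finset.card_erase_of_mem hv, h3]
  rcases Finset.card_eq_two.1 this with ⟨a, b, hab, hE⟩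
  have ha : a ∈ t.erase v := hE ▸ (by simp)
  have hb : b ∈ t.erase v := hE ▸ (by simp [hab])
  refine ⟨a, b, hab, fun h => (Finset.mem_erase.1 ha).1 h.symm,
    fun h => (Finset.mem_erase.1 hb).1 h.symm, ?_⟩
  have := Finset.insert_erase hv
  rw [hE] at this
  exact this.symm


/- ## pairs -/

lemma pair_of_card2 {e : Finset ℕ} {v : ℕ} (h2 : e.card = 2) (hv : v ∈ e) :
    ∃ u, u ≠ v ∧ e = {v, u} ∧ e.erase v = {u} := by
  have h1 : (e.erase v).card = 1 := by rw [Finset.card_erase_of_mem hv, h2]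
  rcases Finset.card_eq_one.1 h1 with ⟨u, hu⟩
  have hunv : u ∈ e.erase v := hu ▸ Finset.mem_singleton_self u
  refine ⟨u, (Finset.mem_erase.1 hunv).1, ?_, hu⟩
  have := Finset.insert_erase hv
  rw [hu] at this
  exact this.symm

/- ## edge-at-vertex counting -/

lemma edges_at_per_tri {K : Complex} (hc3 : ∀ t ∈ K, t.card = 3) {t : Finset ℕ}
    (ht : t ∈ K) (w : ℕ) :
    (((edges K).filter (fun e => w ∈ e)).filter (fun e => e ⊆ t)).card
      = if w ∈ t then 2 else 0 := by
  by_cases hw : w ∈ t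
  · simp only [hw, if_true]
    obtain ⟨a, b, hab, hwa, hwb, hts⟩ := triangle_shape hc3 ht hw
    have heq : ((edges K).filter (fun e => w ∈ e)).filter (fun e => e ⊆ t)
        = {({w, a} : Finset ℕ), {w, b}} := by
      ext e
      simp only [Finset.mem_filter, Finset.mem_insert, Finset.mem_singleton]
      constructor
      · rintro ⟨⟨he, hwe⟩, het⟩
        obtain ⟨u, huw, heu, _⟩ := pair_of_card2 (edges_card2 he) hwe
        have hut : u ∈ t := het (heu ▸ (by simp))
        rw [hts] at hut; simp at hut
        rcases hut with rfl | rfl | rfl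
        · exact absurd rfl huw
        · left; rw [heu]
        · right; rw [heu]
      · rintro (rfl | rfl)
        · refine ⟨⟨pair_mem_edges ht hw (by rw [hts]; simp) hwa, by simp⟩, ?_⟩
          intro z hz; simp at hz; rcases hz with rfl | rfl
          · exact hw
          · rw [hts]; simp
        · refine ⟨⟨pair_mem_edges ht hw (by rw [hts]; simp) hwb, by simp⟩, ?_⟩
          intro z hz; simp at hz; rcases hz with rfl | rfl
          · exact hw
          · rw [hts]; simp
    rw [heq]
    have hne : ({w, a} : Finset ℕ) ≠ {w, b} := by
      intro hcon
      have : a ∈ ({w, b} : Finset ℕ) := hcon ▸ (by simp)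
      simp at this
      rcases this with rfl | rfl
      · exact hwa rfl
      · exact hab rfl
    rw [Finset.card_insert_of_notMem (by simp [hne]), Finset.card_singleton]
  · simp only [hw, if_false, Finset.card_eq_zero]
    ext e
    simp only [Finset.mem_filter, Finset.notMem_empty, iff_false]
    rintro ⟨⟨_, hwe⟩, het⟩
    exact hw (het hwe)

lemma sum_edge_count {K : Complex} (hc3 : ∀ t ∈ K, t.card = 3) (w : ℕ) :
    ∑ e ∈ (edges K).filter (fun e => w ∈ e), (K.filter (fun t => e ⊆ t)).card
      = 2 * valence K w := by
  have h1 : ∀ e, (K.filter (fun t => e ⊆ t)).card = ∑ t ∈ K, if e ⊆ t then 1 else 0 :=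
    fun e => Finset.card_filter _ _
  rw [Finset.sum_congr rfl fun e _ => h1 e, Finset.sum_comm]
  have h2 : ∀ t ∈ K, (∑ e ∈ (edges K).filter (fun e => w ∈ e), if e ⊆ t then 1 else 0)
      = if w ∈ t then 2 else 0 := by
    intro t ht
    rw [← Finset.card_filter]
    exact edges_at_per_tri hc3 ht w
  rw [Finset.sum_congr rfl h2]
  have : (∑ t ∈ K, if w ∈ t then 2 else 0) = 2 * ∑ t ∈ K, if w ∈ t then 1 else 0 := by
    rw [Finset.mul_sum]
    exact Finset.sum_congr rfl fun t _ => by split <;> simp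
  rw [this, ← Finset.card_filter]
  rfl


/- ## distance machinery for connected graphs -/

def reachN {α : Type*} (R : α → α → Prop) : ℕ → α → α → Prop
  | 0, x, y => x = y
  | n+1, x, y => ∃ z, reachN R n x z ∧ R z y

lemma reach_of_rtg {α : Type*} {R : α → α → Prop} {x y : α}
    (h : Relation.ReflTransGen R x y) : ∃ n, reachN R n x y := by
  induction h with
  | refl => exact ⟨0, rfl⟩
  | tail _ hR ih => rcases ih with ⟨n, hn⟩; exact ⟨n+1, _, hn, hR⟩

/-- A vertex fan: #triangles at w ≤ 1 + #interior edges at w. -/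
lemma interior_ge {G : Complex} (hG : IsSurface G) {w : ℕ} {t₀ : Finset ℕ}
    (ht₀ : t₀ ∈ G) (hw : w ∈ t₀) :
    (G.filter (fun t => w ∈ t)).card ≤
      1 + (((edges G).filter (fun e => w ∈ e)).filter
        (fun e => (G.filter (fun t => e ⊆ t)).card = 2)).card := by
  classical
  set R := adjAt G w with hR
  set F := G.filter (fun t => w ∈ t) with hF
  set I := ((edges G).filter (fun e => w ∈ e)).filter
      (fun e => (G.filter (fun t => e ⊆ t)).card = 2) with hI
  have ht₀F : t₀ ∈ F := Finset.mem_filter.2 ⟨ht₀, hw⟩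
  have hreach : ∀ y ∈ F, {n | reachN R n t₀ y}.Nonempty := by
    intro y hy
    rcases Finset.mem_filter.1 hy with ⟨hyG, hyw⟩
    exact reach_of_rtg (hG.link_conn w t₀ ht₀ y hyG hw hyw)
  set d : Finset ℕ → ℕ := fun y => sInf {n | reachN R n t₀ y} with hd
  have hdmem : ∀ y ∈ F, reachN R (d y) t₀ y := fun y hy => Nat.sInf_mem (hreach y hy)
  have hstepF : ∀ z y, R z y → z ∈ F := by
    rintro z y ⟨hz, _, hwz, _, _⟩; exact Finset.mem_filter.2 ⟨hz, hwz⟩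
  have hpar : ∀ y ∈ F.erase t₀, ∃ z, z ∈ F ∧ R z y ∧ d z + 1 = d y := by
    intro y hy
    rcases Finset.mem_erase.1 hy with ⟨hynet, hyF⟩
    have hdy0 : d y ≠ 0 := by
      intro h0
      have := hdmem y hyF
      rw [h0] at this
      exact hynet this.symm
    obtain ⟨m, hm⟩ : ∃ m, d y = m + 1 := ⟨d y - 1, by omega⟩
    have hry : reachN R (m+1) t₀ y := hm ▸ hdmem y hyF
    rcases hry with ⟨z, hz, hRzy⟩
    have hzF : z ∈ F := hstepF z y hRzy
    have hdz1 : d z ≤ m := Nat.sInf_le hz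
    have hdz2 : d y ≤ d z + 1 := Nat.sInf_le ⟨z, hdmem z hzF, hRzy⟩
    exact ⟨z, hzF, hRzy, by omega⟩
  have hpar' : ∀ y, ∃ z, y ∈ F.erase t₀ → z ∈ F ∧ R z y ∧ d z + 1 = d y := by
    intro y
    by_cases hy : y ∈ F.erase t₀
    · rcases hpar y hy with ⟨z, hz⟩; exact ⟨z, fun _ => hz⟩
    · exact ⟨y, fun h => absurd h hy⟩
  choose p hp using hpar'
  -- the two triangles of an interior edge
  have hfilt : ∀ y ∈ F.erase t₀, G.filter (fun t => y ∩ p y ⊆ t) = {y, p y} ∧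
      y ∩ p y ∈ I := by
    intro y hy
    obtain ⟨hpF, hRpy, hdp⟩ := hp y hy
    obtain ⟨hpG, hyG, hwp, hwy, hcard⟩ := hRpy
    have hne : p y ≠ y := by
      intro hcon
      rw [hcon, Finset.inter_self] at hcard
      rw [hG.card3 y hyG] at hcard; omega
    have hic : (y ∩ p y).card = 2 := by rw [Finset.inter_comm]; exact hcard
    have hie : y ∩ p y ∈ edges G := sub_mem_edges hyG Finset.inter_subset_left hic
    have hsub : ({y, p y} : Finset (Finset ℕ)) ⊆ G.filter (fun t => y ∩ p y ⊆ t) := by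
      intro u hu; simp only [Finset.mem_insert, Finset.mem_singleton] at hu
      rcases hu with rfl | rfl
      · exact Finset.mem_filter.2 ⟨hyG, Finset.inter_subset_left⟩
      · exact Finset.mem_filter.2 ⟨hpG, Finset.inter_subset_right⟩
    have hc2 : ({y, p y} : Finset (Finset ℕ)).card = 2 := by
      rw [Finset.card_insert_of_notMem (by simp [hne.symm]), Finset.card_singleton]
    have hle := hG.edge_le _ hie
    have heq : G.filter (fun t => y ∩ p y ⊆ t) = {y, p y} :=
      (Finset.eq_of_subset_of_card_le hsub (by omega)).symm
    refine ⟨heq, ?_⟩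
    refine Finset.mem_filter.2 ⟨Finset.mem_filter.2 ⟨hie, ?_⟩, by rw [heq]; exact hc2⟩
    exact Finset.mem_inter.2 ⟨hwy, hwp⟩
  have hinj : Set.InjOn (fun y => y ∩ p y) (F.erase t₀) := by
    intro y₁ hy₁ y₂ hy₂ he
    simp only at he
    have h1 := hfilt y₁ hy₁
    have h2 := hfilt y₂ hy₂
    have : ({y₁, p y₁} : Finset (Finset ℕ)) = {y₂, p y₂} := by
      rw [← h1.1, ← h2.1, he]
    by_contra hne
    have hy1m : y₁ ∈ ({y₂, p y₂} : Finset (Finset ℕ)) := this ▸ (by simp)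
    have hy2m : y₂ ∈ ({y₁, p y₁} : Finset (Finset ℕ)) := this ▸ (by simp)
    simp only [Finset.mem_insert, Finset.mem_singleton] at hy1m hy2m
    rcases hy1m with rfl | h1e
    · exact hne rfl
    rcases hy2m with rfl | h2e
    · exact hne rfl
    have hd1 := (hp y₁ hy₁).2.2
    have hd2 := (hp y₂ hy₂).2.2
    rw [← h2e] at hd1
    rw [← h1e] at hd2
    omega
  have hmaps : ∀ y ∈ F.erase t₀, y ∩ p y ∈ I := fun y hy => (hfilt y hy).2
  have := Finset.card_le_card_of_injOn _ hmaps hinj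
  have hcE : (F.erase t₀).card = F.card - 1 := Finset.card_erase_of_mem ht₀F
  have hFpos : 1 ≤ F.card := Finset.card_pos.2 ⟨t₀, ht₀F⟩
  omega


/-- At most two boundary edges at any vertex of a surface. -/
lemma bdry_at_le_two {G : Complex} (hG : IsSurface G) (w : ℕ) :
    ((bdryEdges G).filter (fun e => w ∈ e)).card ≤ 2 := by
  classical
  by_cases hw : ∃ t ∈ G, w ∈ t
  · obtain ⟨t₀, ht₀, hwt₀⟩ := hw
    set Ew := (edges G).filter (fun e => w ∈ e) with hEw
    set I := Ew.filter (fun e => (G.filter (fun t => e ⊆ t)).card = 2) with hI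
    set B := Ew.filter (fun e => ¬ (G.filter (fun t => e ⊆ t)).card = 2) with hB
    have hsum : ∑ e ∈ Ew, (G.filter (fun t => e ⊆ t)).card = 2 * valence G w :=
      sum_edge_count hG.card3 w
    have hsplit := Finset.sum_filter_add_sum_filter_not Ew
      (fun e => (G.filter (fun t => e ⊆ t)).card = 2) (fun e => (G.filter (fun t => e ⊆ t)).card)
    have hIsum : ∑ e ∈ I, (G.filter (fun t => e ⊆ t)).card = 2 * I.card := by
      rw [Finset.sum_congr rfl (fun e he => (Finset.mem_filter.1 he).2)]
      simp [mul_comm, hI]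
    have hBsum : ∑ e ∈ B, (G.filter (fun t => e ⊆ t)).card = B.card := by
      rw [Finset.sum_congr rfl (fun e he => ?_), Finset.sum_const, smul_eq_mul, mul_one]
      rcases Finset.mem_filter.1 he with ⟨heEw, hne2⟩
      rcases Finset.mem_filter.1 heEw with ⟨heE, _⟩
      have hle := hG.edge_le _ heE
      have hpos : 0 < (G.filter (fun t => e ⊆ t)).card := by
        rcases mem_edges.1 heE with ⟨t, ht, hsub, _⟩
        exact Finset.card_pos.2 ⟨t, Finset.mem_filter.2 ⟨ht, hsub⟩⟩
      omega
    have hval : valence G w ≤ 1 + I.card := interior_ge hG ht₀ hwt₀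
    have hBeq : (bdryEdges G).filter (fun e => w ∈ e) = B := by
      ext e
      simp only [hB, hEw, bdryEdges, Finset.mem_filter]
      constructor
      · rintro ⟨⟨he, h1⟩, hwe⟩
        exact ⟨⟨he, hwe⟩, by omega⟩
      · rintro ⟨⟨he, hwe⟩, hne⟩
        have hle := hG.edge_le _ he
        have hpos : 0 < (G.filter (fun t => e ⊆ t)).card := by
          rcases mem_edges.1 he with ⟨t, ht, hsub, _⟩
          exact Finset.card_pos.2 ⟨t, Finset.mem_filter.2 ⟨ht, hsub⟩⟩
        exact ⟨⟨he, by omega⟩, hwe⟩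
    have hfin : 2 * I.card + B.card = 2 * valence G w := by
      rw [← hIsum, ← hBsum, ← hsum]
      exact hsplit
    rw [hBeq]
    omega
  · push_neg at hw
    have : (bdryEdges G).filter (fun e => w ∈ e) = ∅ := by
      ext e
      simp only [Finset.mem_filter, Finset.notMem_empty, iff_false, bdryEdges]
      rintro ⟨⟨he, _⟩, hwe⟩
      rcases mem_edges.1 he with ⟨t, ht, hsub, _⟩
      exact hw t ht (hsub hwe)
    rw [this]; simp

/-- Every vertex of a closed surface has valence at least 3. -/
lemma valence_ge_three {K : Complex} (hK : IsClosedSurface K) {v : ℕ}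
    (hv : v ∈ vertices K) : 3 ≤ valence K v := by
  rcases mem_vertices.1 hv with ⟨t, ht, hvt⟩
  obtain ⟨a, b, hab, hva, hvb, hts⟩ := triangle_shape hK.1.card3 ht hvt
  have hat : a ∈ t := by rw [hts]; simp
  have hbt : b ∈ t := by rw [hts]; simp
  obtain ⟨ta, hta, htat, hvta, hata⟩ := other_tri hK ht hva hvt hat
  obtain ⟨tb, htb, htbt, hvtb, hbtb⟩ := other_tri hK ht hvb hvt hbt
  have htab : ta ≠ tb := by
    intro hcon
    have hsub : t ⊆ ta := by
      rw [hts]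
      intro z hz; simp at hz
      rcases hz with rfl | rfl | rfl
      · exact hvta
      · exact hata
      · rw [hcon]; exact hbtb
    have := Finset.eq_of_subset_of_card_le hsub
      (by rw [hK.1.card3 t ht, hK.1.card3 ta hta])
    exact htat this.symm
  have hsub : ({t, ta, tb} : Finset (Finset ℕ)) ⊆ K.filter (fun s => v ∈ s) := by
    intro u hu; simp at hu
    rcases hu with rfl | rfl | rfl
    · exact Finset.mem_filter.2 ⟨ht, hvt⟩
    · exact Finset.mem_filter.2 ⟨hta, hvta⟩
    · exact Finset.mem_filter.2 ⟨htb, hvtb⟩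
  have hcard : ({t, ta, tb} : Finset (Finset ℕ)).card = 3 := by
    rw [Finset.card_insert_of_notMem (by simp [Ne.symm htat, Ne.symm htbt]),
      Finset.card_insert_of_notMem (by simp [htab]), Finset.card_singleton]
  calc 3 = ({t, ta, tb} : Finset (Finset ℕ)).card := hcard.symm
    _ ≤ _ := Finset.card_le_card hsub

/-- The link of a vertex of a closed surface has at least `valence` vertices. -/
lemma link_card_ge {K : Complex} (hK : IsClosedSurface K) (v : ℕ) :
    valence K v ≤ (linkV K v).card := by
  classical
  set Ew := (edges K).filter (fun e => v ∈ e) with hEw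
  have hsum : ∑ e ∈ Ew, (K.filter (fun t => e ⊆ t)).card = 2 * valence K v :=
    sum_edge_count hK.1.card3 v
  have hall : ∀ e ∈ Ew, (K.filter (fun t => e ⊆ t)).card = 2 := by
    intro e he; exact hK.2 e (Finset.mem_filter.1 he).1
  have hEwcard : 2 * Ew.card = 2 * valence K v := by
    rw [← hsum, Finset.sum_congr rfl hall]; simp [mul_comm]
  have hmaps : ∀ e ∈ Ew, (e.erase v).sum id ∈ linkV K v := by
    intro e he
    rcases Finset.mem_filter.1 he with ⟨heE, hve⟩
    obtain ⟨u, huv, heu, her⟩ := pair_of_card2 (edges_card2 heE) hve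
    rw [her]; simp only [Finset.sum_singleton, id]
    rcases mem_edges.1 heE with ⟨t, ht, hsub, _⟩
    refine Finset.mem_erase.2 ⟨huv, Finset.mem_biUnion.2 ⟨t, ?_, ?_⟩⟩
    · exact Finset.mem_filter.2 ⟨ht, hsub (by rw [heu]; simp)⟩
    · exact hsub (by rw [heu]; simp)
  have hinj : Set.InjOn (fun e => (e.erase v).sum id) (Ew : Set (Finset ℕ)) := by
    intro e₁ h₁ e₂ h₂ he
    simp only at he
    rcases Finset.mem_filter.1 (Finset.mem_coe.1 h₁) with ⟨h₁E, hv₁⟩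
    rcases Finset.mem_filter.1 (Finset.mem_coe.1 h₂) with ⟨h₂E, hv₂⟩
    obtain ⟨u₁, hu₁v, he₁, her₁⟩ := pair_of_card2 (edges_card2 h₁E) hv₁
    obtain ⟨u₂, hu₂v, he₂, her₂⟩ := pair_of_card2 (edges_card2 h₂E) hv₂
    rw [her₁, her₂] at he
    simp only [Finset.sum_singleton, id] at he
    rw [he₁, he₂, he]
  have := Finset.card_le_card_of_injOn _ hmaps hinj
  omega


lemma two_of_card_two {α : Type*} [DecidableEq α] {s : Finset α} (h : s.card = 2) :
    ∃ a b, a ≠ b ∧ a ∈ s ∧ b ∈ s := by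
  rcases Finset.card_eq_two.1 h with ⟨a, b, hab, hs⟩
  exact ⟨a, b, hab, hs ▸ (by simp), hs ▸ (by simp)⟩

/-- A circle has at least three vertices. -/
lemma circle_three_verts {E : Complex} (hE : IsCircle E) : 3 ≤ (E.biUnion id).card := by
  obtain ⟨⟨e₀, he₀⟩, h2, hdeg, _⟩ := hE
  have he₀2 := h2 e₀ he₀
  obtain ⟨p, hp⟩ := Finset.card_pos.1 (by omega : 0 < e₀.card)
  obtain ⟨q, hqp, he₀pq, _⟩ := pair_of_card2 he₀2 hp
  have hpB : p ∈ E.biUnion id := Finset.mem_biUnion.2 ⟨e₀, he₀, hp⟩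
  have hdp := hdeg p hpB
  obtain ⟨e₁, he₁, hne, hpe₁⟩ : ∃ e₁ ∈ E, e₁ ≠ e₀ ∧ p ∈ e₁ := by
    have he₀f : e₀ ∈ E.filter (fun e => p ∈ e) := Finset.mem_filter.2 ⟨he₀, hp⟩
    by_contra hc; push_neg at hc
    have : E.filter (fun e => p ∈ e) ⊆ {e₀} := by
      intro u hu
      rcases Finset.mem_filter.1 hu with ⟨huE, hpu⟩
      by_contra hne
      simp at hne
      exact hc u huE hne hpu
    have := Finset.card_le_card this; simp [hdp] at this
  obtain ⟨r, hrp, he₁pr, _⟩ := pair_of_card2 (h2 e₁ he₁) hpe₁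
  have hrq : r ≠ q := by
    rintro rfl
    apply hne
    rw [he₁pr, he₀pq]
  have hsub : ({p, q, r} : Finset ℕ) ⊆ E.biUnion id := by
    intro z hz; simp at hz
    rcases hz with rfl | rfl | rfl
    · exact hpB
    · exact Finset.mem_biUnion.2 ⟨e₀, he₀, by rw [he₀pq]; simp⟩
    · exact Finset.mem_biUnion.2 ⟨e₁, he₁, by rw [he₁pr]; simp⟩
  calc 3 = ({p, q, r} : Finset ℕ).card := by
        rw [Finset.card_insert_of_notMem (by simp [Ne.symm hqp, Ne.symm hrp]),
          Finset.card_insert_of_notMem (by simp [Ne.symm hrq]), Finset.card_singleton]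
    _ ≤ _ := Finset.card_le_card hsub


/- ## tools for the classification -/

lemma third_vertex {K : Complex} (hc3 : ∀ t ∈ K, t.card = 3) {t : Finset ℕ}
    (ht : t ∈ K) {x y : ℕ} (hxy : x ≠ y) (hx : x ∈ t) (hy : y ∈ t) :
    ∃ z, z ≠ x ∧ z ≠ y ∧ z ∈ t ∧ t = {x, y, z} := by
  have h3 := hc3 t ht
  have h1 : ((t.erase x).erase y).card = 1 := by
    rw [Finset.card_erase_of_mem (Finset.mem_erase.2 ⟨hxy.symm, hy⟩),
      Finset.card_erase_of_mem hx, h3]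
  rcases Finset.card_eq_one.1 h1 with ⟨z, hz⟩
  have hzm : z ∈ (t.erase x).erase y := hz ▸ Finset.mem_singleton_self z
  rcases Finset.mem_erase.1 hzm with ⟨hzy, hzm'⟩
  rcases Finset.mem_erase.1 hzm' with ⟨hzx, hzt⟩
  refine ⟨z, hzx, hzy, hzt, ?_⟩
  have hsub : ({x, y, z} : Finset ℕ) ⊆ t := by
    intro u hu; simp at hu
    rcases hu with rfl | rfl | rfl <;> assumption
  have hcard : ({x, y, z} : Finset ℕ).card = 3 := by
    rw [Finset.card_insert_of_notMem (by simp [hxy, Ne.symm hzx]),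
      Finset.card_insert_of_notMem (by simp [Ne.symm hzy]), Finset.card_singleton]
  exact (Finset.eq_of_subset_of_card_le hsub (by omega)).symm

lemma tris_eq {K : Complex} {v : ℕ} {S : Finset (Finset ℕ)}
    (hsub : S ⊆ K.filter (fun t => v ∈ t)) (hcard : valence K v ≤ S.card) :
    K.filter (fun t => v ∈ t) = S :=
  (Finset.eq_of_subset_of_card_le hsub hcard).symm

lemma fresh_contra {K : Complex} (hK : IsClosedSurface K) {v : ℕ}
    {S : Finset (Finset ℕ)} (hfilt : K.filter (fun t => v ∈ t) = S)
    {w : Finset ℕ} (hw : w ∈ S) {q : ℕ} (hq : q ∈ w) (hqv : q ≠ v)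
    (honly : ∀ s ∈ S, q ∈ s → s = w) : False := by
  have hwf : w ∈ K.filter (fun t => v ∈ t) := hfilt ▸ hw
  rcases Finset.mem_filter.1 hwf with ⟨hwK, hvw⟩
  obtain ⟨B, hBK, hBne, hvB, hqB⟩ := other_tri hK hwK (Ne.symm hqv) hvw hq
  have : B ∈ S := hfilt ▸ Finset.mem_filter.2 ⟨hBK, hvB⟩
  exact hBne (honly B this hqB)

lemma fourth_tri {K : Complex} {w : ℕ} {S' : Finset (Finset ℕ)}
    (hsub : S' ⊆ K.filter (fun t => w ∈ t)) (hcard : S'.card < valence K w) :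
    ∃ t', t' ∈ K ∧ w ∈ t' ∧ t' ∉ S' := by
  by_contra hc; push_neg at hc
  have : K.filter (fun t => w ∈ t) ⊆ S' := by
    intro t ht
    rcases Finset.mem_filter.1 ht with ⟨htK, hwt⟩
    exact hc t htK hwt
  have := Finset.card_le_card this
  unfold valence at hcard
  omega

lemma vertex_closure {K : Complex} (hK : IsClosedSurface K) {W : Finset ℕ}
    {t₀ : Finset ℕ} (ht₀ : t₀ ∈ K) (ht₀W : t₀ ⊆ W)
    (hW : ∀ w ∈ W, ∀ t ∈ K, w ∈ t → t ⊆ W) : vertices K ⊆ W := by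
  have htri : ∀ t ∈ K, t ⊆ W := by
    intro t ht
    have chain := hK.1.conn t₀ ht₀ t ht
    induction chain with
    | refl => exact ht₀W
    | @tail c s' hc hadj ih =>
      obtain ⟨x, hx⟩ := Finset.card_pos.1 (by rw [hadj.2.2]; omega : 0 < (c ∩ s').card)
      rcases Finset.mem_inter.1 hx with ⟨hxc, hxs⟩
      exact hW x (ih hadj.1 hxc) s' hadj.2.1 hxs
  intro x hx
  rcases mem_vertices.1 hx with ⟨t, ht, hxt⟩
  exact htri t ht hxt

lemma tri_comm (x y z : ℕ) : ({x, y, z} : Finset ℕ) = {x, z, y} := by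
  ext w; simp; tauto

lemma card_le_succ {α : Type*} [DecidableEq α] {s : Finset α} {a : α} {n : ℕ}
    (h : s.card ≤ n) : (insert a s).card ≤ n + 1 :=
  le_trans (Finset.card_insert_le _ _) (by omega)

set_option maxHeartbeats 1600000 in
/-- Classification: a connected closed surface with maximal valence at most 4
has at most 6 vertices. -/
lemma classify_le6 {K : Complex} (hK : IsClosedSurface K) (hmv : mv K ≤ 4) :
    (vertices K).card ≤ 6 := by
  classical
  have hc3 := hK.1.card3
  obtain ⟨ta, hta⟩ := hK.1.nonempty
  have hVne : (vertices K).Nonempty := by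
    have := hc3 ta hta
    obtain ⟨x, hx⟩ := Finset.card_pos.1 (by omega : 0 < ta.card)
    exact ⟨x, mem_vertices.2 ⟨ta, hta, hx⟩⟩
  obtain ⟨v, hvV, hsup⟩ := Finset.exists_mem_eq_sup (vertices K) hVne (valence K)
  have hvle : valence K v ≤ 4 := by unfold mv at hmv; omega
  have hv3 := valence_ge_three hK hvV
  have hall_le : ∀ w ∈ vertices K, valence K w ≤ 4 := by
    intro w hw
    have h1 : valence K w ≤ (vertices K).sup (valence K) := Finset.le_sup hw
    unfold mv at hmv; omega
  have hpos : 0 < (K.filter (fun t => v ∈ t)).card := lt_of_lt_of_le (by norm_num) hv3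
  obtain ⟨t₁, ht₁f⟩ := Finset.card_pos.1 hpos
  rcases Finset.mem_filter.1 ht₁f with ⟨ht₁K, hvt₁⟩
  obtain ⟨a, b, hab, hva, hvb, ht₁s⟩ := triangle_shape hc3 ht₁K hvt₁
  have hat₁ : a ∈ t₁ := by rw [ht₁s]; simp
  have hbt₁ : b ∈ t₁ := by rw [ht₁s]; simp
  obtain ⟨t₂, ht₂K, ht₂t₁, hvt₂, hbt₂⟩ := other_tri hK ht₁K hvb hvt₁ hbt₁
  obtain ⟨c, hcv, hcb, hct₂, ht₂s⟩ := third_vertex hc3 ht₂K hvb hvt₂ hbt₂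
  have hca : c ≠ a := by
    rintro rfl
    apply ht₂t₁
    rw [ht₂s, ht₁s]; ext z; simp; tauto
  have hct₁ : c ∉ t₁ := by rw [ht₁s]; simp [hcv, hca, hcb]
  have hat₂ : a ∉ t₂ := by rw [ht₂s]; simp [Ne.symm hva, hab, Ne.symm hca]
  rcases (by omega : valence K v = 3 ∨ valence K v = 4) with hv4 | hv4
  · -- CASE mv = 3 : tetrahedron
    obtain ⟨t₃, ht₃K, ht₃t₁, hvt₃, hat₃⟩ := other_tri hK ht₁K hva hvt₁ hat₁
    have ht₃t₂ : t₃ ≠ t₂ := fun h => hat₂ (h ▸ hat₃)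
    have hfv : K.filter (fun t => v ∈ t) = {t₁, t₂, t₃} := by
      apply tris_eq
      · intro u hu; simp at hu
        rcases hu with rfl | rfl | rfl
        · exact Finset.mem_filter.2 ⟨ht₁K, hvt₁⟩
        · exact Finset.mem_filter.2 ⟨ht₂K, hvt₂⟩
        · exact Finset.mem_filter.2 ⟨ht₃K, hvt₃⟩
      · have hcard : ({t₁, t₂, t₃} : Finset (Finset ℕ)).card = 3 := by
          rw [Finset.card_insert_of_notMem (by simp [Ne.symm ht₂t₁, Ne.symm ht₃t₁]),
            Finset.card_insert_of_notMem (by simp [Ne.symm ht₃t₂]), Finset.card_singleton]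
        omega
    obtain ⟨u, huK, hut₂, hvu, hcu⟩ := other_tri hK ht₂K (Ne.symm hcv) hvt₂ hct₂
    have hu3 : u = t₃ := by
      have : u ∈ ({t₁, t₂, t₃} : Finset (Finset ℕ)) :=
        hfv ▸ Finset.mem_filter.2 ⟨huK, hvu⟩
      simp at this
      rcases this with rfl | rfl | rfl
      · exact absurd hcu hct₁
      · exact absurd rfl hut₂
      · rfl
    have hct₃ : c ∈ t₃ := hu3 ▸ hcu
    have ht₃s : t₃ = {v, a, c} := by
      obtain ⟨z, hzv, hza, hzt, hts⟩ := third_vertex hc3 ht₃K hva hvt₃ hat₃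
      have hcz : c = z := by
        have := hts ▸ hct₃
        simp at this
        rcases this with h | h | h
        · exact absurd h hcv
        · exact absurd h hca
        · exact h
      rw [hts, ← hcz]
    have hbt₃ : b ∉ t₃ := by rw [ht₃s]; simp [Ne.symm hvb, Ne.symm hab, Ne.symm hcb]
    have hall3 : ∀ w ∈ vertices K, valence K w = 3 := by
      intro w hw
      have h1 : valence K w ≤ (vertices K).sup (valence K) := Finset.le_sup hw
      rw [hsup, hv4] at h1
      have := valence_ge_three hK hw
      omega
    have haV : a ∈ vertices K := mem_vertices.2 ⟨t₁, ht₁K, hat₁⟩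
    have hbV : b ∈ vertices K := mem_vertices.2 ⟨t₁, ht₁K, hbt₁⟩
    have hcV : c ∈ vertices K := mem_vertices.2 ⟨t₂, ht₂K, hct₂⟩
    obtain ⟨u₁, hu₁K, hu₁t₁, hau₁, hbu₁⟩ := other_tri hK ht₁K hab hat₁ hbt₁
    have hvu₁ : v ∉ u₁ := by
      intro hv'
      have : u₁ ∈ ({t₁, t₂, t₃} : Finset (Finset ℕ)) :=
        hfv ▸ Finset.mem_filter.2 ⟨hu₁K, hv'⟩
      simp at this
      rcases this with rfl | rfl | rfl
      · exact hu₁t₁ rfl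
      · exact hat₂ hau₁
      · exact hbt₃ hbu₁
    have hu₁t₃ : u₁ ≠ t₃ := fun h => hbt₃ (h ▸ hbu₁)
    have hu₁t₂ : u₁ ≠ t₂ := fun h => hat₂ (h ▸ hau₁)
    have hfa : K.filter (fun t => a ∈ t) = {t₁, t₃, u₁} := by
      apply tris_eq
      · intro u' hu'; simp at hu'
        rcases hu' with rfl | rfl | rfl
        · exact Finset.mem_filter.2 ⟨ht₁K, hat₁⟩
        · exact Finset.mem_filter.2 ⟨ht₃K, hat₃⟩
        · exact Finset.mem_filter.2 ⟨hu₁K, hau₁⟩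
      · have hcard : ({t₁, t₃, u₁} : Finset (Finset ℕ)).card = 3 := by
          rw [Finset.card_insert_of_notMem (by simp [Ne.symm ht₃t₁, Ne.symm hu₁t₁]),
            Finset.card_insert_of_notMem (by simp [Ne.symm hu₁t₃]), Finset.card_singleton]
        rw [hall3 a haV]; omega
    obtain ⟨u₂, hu₂K, hu₂t₃, hau₂, hcu₂⟩ := other_tri hK ht₃K (Ne.symm hca)
      hat₃ hct₃
    have hu₂u₁ : u₂ = u₁ := by
      have : u₂ ∈ ({t₁, t₃, u₁} : Finset (Finset ℕ)) :=
        hfa ▸ Finset.mem_filter.2 ⟨hu₂K, hau₂⟩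
      simp at this
      rcases this with rfl | rfl | rfl
      · exact absurd hcu₂ hct₁
      · exact absurd rfl hu₂t₃
      · rfl
    have hcu₁ : c ∈ u₁ := hu₂u₁ ▸ hcu₂
    have hu₁s : u₁ = {a, b, c} := by
      obtain ⟨z, hza, hzb, hzt, hts⟩ := third_vertex hc3 hu₁K hab hau₁ hbu₁
      have hcz : c = z := by
        have := hts ▸ hcu₁
        simp at this
        rcases this with h | h | h
        · exact absurd h hca
        · exact absurd h hcb
        · exact h
      rw [hts, ← hcz]
    have hfb : K.filter (fun t => b ∈ t) = {t₁, t₂, u₁} := by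
      apply tris_eq
      · intro u' hu'; simp at hu'
        rcases hu' with rfl | rfl | rfl
        · exact Finset.mem_filter.2 ⟨ht₁K, hbt₁⟩
        · exact Finset.mem_filter.2 ⟨ht₂K, hbt₂⟩
        · exact Finset.mem_filter.2 ⟨hu₁K, hbu₁⟩
      · have hcard : ({t₁, t₂, u₁} : Finset (Finset ℕ)).card = 3 := by
          rw [Finset.card_insert_of_notMem (by simp [Ne.symm ht₂t₁, Ne.symm hu₁t₁]),
            Finset.card_insert_of_notMem (by simp [Ne.symm hu₁t₂]), Finset.card_singleton]
        rw [hall3 b hbV]; omega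
    have hfc : K.filter (fun t => c ∈ t) = {t₂, t₃, u₁} := by
      apply tris_eq
      · intro u' hu'; simp at hu'
        rcases hu' with rfl | rfl | rfl
        · exact Finset.mem_filter.2 ⟨ht₂K, hct₂⟩
        · exact Finset.mem_filter.2 ⟨ht₃K, hct₃⟩
        · exact Finset.mem_filter.2 ⟨hu₁K, hcu₁⟩
      · have hcard : ({t₂, t₃, u₁} : Finset (Finset ℕ)).card = 3 := by
          rw [Finset.card_insert_of_notMem (by simp [Ne.symm ht₃t₂, Ne.symm hu₁t₂]),
            Finset.card_insert_of_notMem (by simp [Ne.symm hu₁t₃]), Finset.card_singleton]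
        rw [hall3 c hcV]; omega
    have hWt₁ : t₁ ⊆ ({v, a, b, c} : Finset ℕ) := by
      rw [ht₁s]; intro z hz; simp only [Finset.mem_insert, Finset.mem_singleton] at hz ⊢; rcases hz with rfl | rfl | rfl <;> simp
    have hWt₂ : t₂ ⊆ ({v, a, b, c} : Finset ℕ) := by
      rw [ht₂s]; intro z hz; simp only [Finset.mem_insert, Finset.mem_singleton] at hz ⊢; rcases hz with rfl | rfl | rfl <;> simp
    have hWt₃ : t₃ ⊆ ({v, a, b, c} : Finset ℕ) := by
      rw [ht₃s]; intro z hz; simp only [Finset.mem_insert, Finset.mem_singleton] at hz ⊢; rcases hz with rfl | rfl | rfl <;> simp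
    have hWu₁ : u₁ ⊆ ({v, a, b, c} : Finset ℕ) := by
      rw [hu₁s]; intro z hz; simp only [Finset.mem_insert, Finset.mem_singleton] at hz ⊢; rcases hz with rfl | rfl | rfl <;> simp
    have hW : ∀ w ∈ ({v, a, b, c} : Finset ℕ), ∀ t ∈ K, w ∈ t →
        t ⊆ ({v, a, b, c} : Finset ℕ) := by
      intro w hw t ht hwt
      simp at hw
      rcases hw with rfl | rfl | rfl | rfl
      · have : t ∈ ({t₁, t₂, t₃} : Finset (Finset ℕ)) :=
          hfv ▸ Finset.mem_filter.2 ⟨ht, hwt⟩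
        simp at this
        rcases this with rfl | rfl | rfl
        · exact hWt₁
        · exact hWt₂
        · exact hWt₃
      · have : t ∈ ({t₁, t₃, u₁} : Finset (Finset ℕ)) :=
          hfa ▸ Finset.mem_filter.2 ⟨ht, hwt⟩
        simp at this
        rcases this with rfl | rfl | rfl
        · exact hWt₁
        · exact hWt₃
        · exact hWu₁
      · have : t ∈ ({t₁, t₂, u₁} : Finset (Finset ℕ)) :=
          hfb ▸ Finset.mem_filter.2 ⟨ht, hwt⟩
        simp at this
        rcases this with rfl | rfl | rfl
        · exact hWt₁
        · exact hWt₂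
        · exact hWu₁
      · have : t ∈ ({t₂, t₃, u₁} : Finset (Finset ℕ)) :=
          hfc ▸ Finset.mem_filter.2 ⟨ht, hwt⟩
        simp at this
        rcases this with rfl | rfl | rfl
        · exact hWt₂
        · exact hWt₃
        · exact hWu₁
    have hsub := vertex_closure hK ht₁K hWt₁ hW
    have h1 := Finset.card_le_card hsub
    have h2 : ({v, a, b, c} : Finset ℕ).card ≤ 4 :=
      card_le_succ (card_le_succ (card_le_succ (by simp)))
    omega
  · -- CASE mv = 4
    obtain ⟨t₃, ht₃K, ht₃t₂, hvt₃, hct₃⟩ := other_tri hK ht₂K (Ne.symm hcv) hvt₂ hct₂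
    obtain ⟨d, hdv, hdc, hdt₃, ht₃s⟩ := third_vertex hc3 ht₃K (Ne.symm hcv) hvt₃ hct₃
    have hdb : d ≠ b := by
      rintro rfl
      apply ht₃t₂
      rw [ht₃s, ht₂s]; ext z; simp; tauto
    have ht₃t₁ : t₃ ≠ t₁ := fun h => hct₁ (h ▸ hct₃)
    by_cases hda : d = a
    · -- impossible: the link of v would close up after three triangles
      exfalso
      subst hda
      have hat₃ : d ∈ t₃ := hdt₃
      have hsub3 : ({t₁, t₂, t₃} : Finset (Finset ℕ)) ⊆ K.filter (fun t => v ∈ t) := by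
        intro u hu; simp at hu
        rcases hu with rfl | rfl | rfl
        · exact Finset.mem_filter.2 ⟨ht₁K, hvt₁⟩
        · exact Finset.mem_filter.2 ⟨ht₂K, hvt₂⟩
        · exact Finset.mem_filter.2 ⟨ht₃K, hvt₃⟩
      have hcard3 : ({t₁, t₂, t₃} : Finset (Finset ℕ)).card = 3 := by
        rw [Finset.card_insert_of_notMem (by simp [Ne.symm ht₂t₁, Ne.symm ht₃t₁]),
          Finset.card_insert_of_notMem (by simp [Ne.symm ht₃t₂]), Finset.card_singleton]
      obtain ⟨t₄, ht₄K, hvt₄, ht₄n⟩ := fourth_tri hsub3 (by omega)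
      simp only [Finset.mem_insert, Finset.mem_singleton, not_or] at ht₄n
      obtain ⟨h41, h42, h43⟩ := ht₄n
      have hfv : K.filter (fun t => v ∈ t) = {t₁, t₂, t₃, t₄} := by
        apply tris_eq
        · intro u hu; simp at hu
          rcases hu with rfl | rfl | rfl | rfl
          · exact Finset.mem_filter.2 ⟨ht₁K, hvt₁⟩
          · exact Finset.mem_filter.2 ⟨ht₂K, hvt₂⟩
          · exact Finset.mem_filter.2 ⟨ht₃K, hvt₃⟩
          · exact Finset.mem_filter.2 ⟨ht₄K, hvt₄⟩
        · have : ({t₁, t₂, t₃, t₄} : Finset (Finset ℕ)).card = 4 := by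
            rw [Finset.card_insert_of_notMem
                (by simp [Ne.symm ht₂t₁, Ne.symm ht₃t₁, Ne.symm h41]),
              Finset.card_insert_of_notMem (by simp [Ne.symm ht₃t₂, Ne.symm h42]),
              Finset.card_insert_of_notMem (by simp [Ne.symm h43]),
              Finset.card_singleton]
          omega
      obtain ⟨p, q, hpq, hvp, hvq, ht₄s⟩ := triangle_shape hc3 ht₄K hvt₄
      have hpt₄ : p ∈ t₄ := by rw [ht₄s]; simp
      have hqt₄ : q ∈ t₄ := by rw [ht₄s]; simp
      have hres : ∀ r, r ≠ v → r ∈ t₄ → (r = d ∨ r = b ∨ r = c) := by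
        intro r h1 h5
        by_contra hcon
        push_neg at hcon
        obtain ⟨h2, h3, h4⟩ := hcon
        refine fresh_contra hK hfv (by simp) h5 h1 ?_
        intro s hs hrs
        simp at hs
        rcases hs with rfl | rfl | rfl | rfl
        · exfalso; rw [ht₁s] at hrs; simp at hrs; tauto
        · exfalso; rw [ht₂s] at hrs; simp at hrs; tauto
        · exfalso; rw [ht₃s] at hrs; simp at hrs; tauto
        · rfl
      have hp3 := hres p (Ne.symm hvp) hpt₄
      have hq3 := hres q (Ne.symm hvq) hqt₄
      rcases hp3 with rfl | rfl | rfl <;> rcases hq3 with rfl | rfl | rfl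
      · exact hpq rfl
      · exact h41 (by rw [ht₄s, ht₁s])
      · exact h43 (by rw [ht₄s, ht₃s, tri_comm])
      · exact h41 (by rw [ht₄s, ht₁s, tri_comm])
      · exact hpq rfl
      · exact h42 (by rw [ht₄s, ht₂s])
      · exact h43 (by rw [ht₄s, ht₃s])
      · exact h42 (by rw [ht₄s, ht₂s, tri_comm])
      · exact hpq rfl
    · -- d is a genuinely new vertex : the link of v is the square a b c d
      obtain ⟨t₄, ht₄K, ht₄t₁, hvt₄, hat₄⟩ := other_tri hK ht₁K hva hvt₁ hat₁
      have hat₃ : a ∉ t₃ := by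
        rw [ht₃s]; simp [Ne.symm hva, Ne.symm hca, (show a ≠ d from fun h => hda h.symm)]
      have ht₄t₂ : t₄ ≠ t₂ := fun h => hat₂ (h ▸ hat₄)
      have ht₄t₃ : t₄ ≠ t₃ := fun h => hat₃ (h ▸ hat₄)
      have hfv : K.filter (fun t => v ∈ t) = {t₁, t₂, t₃, t₄} := by
        apply tris_eq
        · intro u hu; simp at hu
          rcases hu with rfl | rfl | rfl | rfl
          · exact Finset.mem_filter.2 ⟨ht₁K, hvt₁⟩
          · exact Finset.mem_filter.2 ⟨ht₂K, hvt₂⟩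
          · exact Finset.mem_filter.2 ⟨ht₃K, hvt₃⟩
          · exact Finset.mem_filter.2 ⟨ht₄K, hvt₄⟩
        · have : ({t₁, t₂, t₃, t₄} : Finset (Finset ℕ)).card = 4 := by
            rw [Finset.card_insert_of_notMem
                (by simp [Ne.symm ht₂t₁, Ne.symm ht₃t₁, Ne.symm ht₄t₁]),
              Finset.card_insert_of_notMem (by simp [Ne.symm ht₃t₂, Ne.symm ht₄t₂]),
              Finset.card_insert_of_notMem (by simp [Ne.symm ht₄t₃]),
              Finset.card_singleton]
          omega
      have hdt₁ : d ∉ t₁ := by rw [ht₁s]; simp [hdv, hda, hdb]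
      have hdt₂ : d ∉ t₂ := by rw [ht₂s]; simp [hdv, hdb, hdc]
      obtain ⟨ud, hudK, hudt₃, hvud, hdud⟩ := other_tri hK ht₃K (Ne.symm hdv) hvt₃ hdt₃
      have hud4 : ud = t₄ := by
        have : ud ∈ ({t₁, t₂, t₃, t₄} : Finset (Finset ℕ)) :=
          hfv ▸ Finset.mem_filter.2 ⟨hudK, hvud⟩
        simp at this
        rcases this with rfl | rfl | rfl | rfl
        · exact absurd hdud hdt₁
        · exact absurd hdud hdt₂
        · exact absurd rfl hudt₃
        · rfl
      have hdt₄ : d ∈ t₄ := hud4 ▸ hdud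
      have ht₄s : t₄ = {v, a, d} := by
        obtain ⟨z, hzv, hza, hzt, hts⟩ := third_vertex hc3 ht₄K hva hvt₄ hat₄
        have hdz : d = z := by
          have := hts ▸ hdt₄
          simp at this
          rcases this with h | h | h
          · exact absurd h hdv
          · exact absurd h hda
          · exact h
        rw [hts, ← hdz]
      have hbt₃ : b ∉ t₃ := by rw [ht₃s]; simp [Ne.symm hvb, Ne.symm hcb, Ne.symm hdb]
      have hbt₄ : b ∉ t₄ := by rw [ht₄s]; simp [Ne.symm hvb, Ne.symm hab, Ne.symm hdb]
      have hct₄ : c ∉ t₄ := by rw [ht₄s]; simp [hcv, hca, Ne.symm hdc]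
      have haV : a ∈ vertices K := mem_vertices.2 ⟨t₁, ht₁K, hat₁⟩
      have hbV : b ∈ vertices K := mem_vertices.2 ⟨t₁, ht₁K, hbt₁⟩
      have hcV : c ∈ vertices K := mem_vertices.2 ⟨t₂, ht₂K, hct₂⟩
      have hdV : d ∈ vertices K := mem_vertices.2 ⟨t₃, ht₃K, hdt₃⟩
      obtain ⟨s₁, hs₁K, hs₁t₁, has₁, hbs₁⟩ := other_tri hK ht₁K hab hat₁ hbt₁
      have hvs₁ : v ∉ s₁ := by
        intro hv'
        have : s₁ ∈ ({t₁, t₂, t₃, t₄} : Finset (Finset ℕ)) :=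
          hfv ▸ Finset.mem_filter.2 ⟨hs₁K, hv'⟩
        simp at this
        rcases this with rfl | rfl | rfl | rfl
        · exact hs₁t₁ rfl
        · exact hat₂ has₁
        · exact hat₃ has₁
        · exact hbt₄ hbs₁
      obtain ⟨x, hxa, hxb, hxs₁, hs₁s⟩ := third_vertex hc3 hs₁K hab has₁ hbs₁
      have hxv : x ≠ v := fun h => hvs₁ (h ▸ hxs₁)
      have hs₁t₂ : s₁ ≠ t₂ := fun h => hat₂ (h ▸ has₁)
      have hs₁t₃ : s₁ ≠ t₃ := fun h => hat₃ (h ▸ has₁)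
      have hs₁t₄ : s₁ ≠ t₄ := fun h => hbt₄ (h ▸ hbs₁)
      have hsubb : ({t₁, t₂, s₁} : Finset (Finset ℕ)) ⊆ K.filter (fun t => b ∈ t) := by
        intro u hu; simp at hu
        rcases hu with rfl | rfl | rfl
        · exact Finset.mem_filter.2 ⟨ht₁K, hbt₁⟩
        · exact Finset.mem_filter.2 ⟨ht₂K, hbt₂⟩
        · exact Finset.mem_filter.2 ⟨hs₁K, hbs₁⟩
      have hcardb3 : ({t₁, t₂, s₁} : Finset (Finset ℕ)).card = 3 := by
        rw [Finset.card_insert_of_notMem (by simp [Ne.symm ht₂t₁, Ne.symm hs₁t₁]),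
          Finset.card_insert_of_notMem (by simp [Ne.symm hs₁t₂]), Finset.card_singleton]
      have hsuba : ({t₁, t₄, s₁} : Finset (Finset ℕ)) ⊆ K.filter (fun t => a ∈ t) := by
        intro u hu; simp at hu
        rcases hu with rfl | rfl | rfl
        · exact Finset.mem_filter.2 ⟨ht₁K, hat₁⟩
        · exact Finset.mem_filter.2 ⟨ht₄K, hat₄⟩
        · exact Finset.mem_filter.2 ⟨hs₁K, has₁⟩
      have hcarda3 : ({t₁, t₄, s₁} : Finset (Finset ℕ)).card = 3 := by
        rw [Finset.card_insert_of_notMem (by simp [Ne.symm ht₄t₁, Ne.symm hs₁t₁]),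
          Finset.card_insert_of_notMem (by simp [Ne.symm hs₁t₄]), Finset.card_singleton]
      by_cases hxc : x = c
      · -- Branch x = c : the 5-vertex sphere (over the triangle a b c)
        subst hxc
        have hcs₁ : x ∈ s₁ := hxs₁
        have hds₁ : d ∉ s₁ := by rw [hs₁s]; simp [hda, hdb, hdc]
        have hvb3 : valence K b = 3 := by
          rcases (by have := hall_le b hbV; have := valence_ge_three hK hbV; omega :
            valence K b = 3 ∨ valence K b = 4) with h | h
          · exact h
          exfalso
          obtain ⟨w, hwK, hbw, hwn⟩ := fourth_tri hsubb (by omega)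
          simp only [Finset.mem_insert, Finset.mem_singleton, not_or] at hwn
          obtain ⟨hw1, hw2, hw3⟩ := hwn
          have hvw : v ∉ w := by
            intro hv'
            have : w ∈ ({t₁, t₂, t₃, t₄} : Finset (Finset ℕ)) :=
              hfv ▸ Finset.mem_filter.2 ⟨hwK, hv'⟩
            simp at this
            rcases this with rfl | rfl | rfl | rfl
            · exact hw1 rfl
            · exact hw2 rfl
            · exact hbt₃ hbw
            · exact hbt₄ hbw
          have haw : a ∉ w := by
            intro ha'
            rcases two_tris hK ht₁K hs₁K (Ne.symm hs₁t₁) hab hat₁ hbt₁ has₁ hbs₁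
              w hwK ha' hbw with h' | h'
            · exact hw1 h'
            · exact hw3 h'
          have hcw : x ∉ w := by
            intro hc'
            rcases two_tris hK ht₂K hs₁K (Ne.symm hs₁t₂) (Ne.symm hcb) hbt₂ hct₂ hbs₁ hcs₁
              w hwK hbw hc' with h' | h'
            · exact hw2 h'
            · exact hw3 h'
          have hfb4 : K.filter (fun t => b ∈ t) = {t₁, t₂, s₁, w} := by
            apply tris_eq
            · intro u hu; simp at hu
              rcases hu with rfl | rfl | rfl | rfl
              · exact Finset.mem_filter.2 ⟨ht₁K, hbt₁⟩
              · exact Finset.mem_filter.2 ⟨ht₂K, hbt₂⟩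
              · exact Finset.mem_filter.2 ⟨hs₁K, hbs₁⟩
              · exact Finset.mem_filter.2 ⟨hwK, hbw⟩
            · have : ({t₁, t₂, s₁, w} : Finset (Finset ℕ)).card = 4 := by
                rw [Finset.card_insert_of_notMem
                    (by simp [Ne.symm ht₂t₁, Ne.symm hs₁t₁, Ne.symm hw1]),
                  Finset.card_insert_of_notMem (by simp [Ne.symm hs₁t₂, Ne.symm hw2]),
                  Finset.card_insert_of_notMem (by simp [Ne.symm hw3]),
                  Finset.card_singleton]
              omega
          obtain ⟨p, q, hpq', hbp, hbq, hws⟩ := triangle_shape hc3 hwK hbw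
          have hpt : p ∈ w := by rw [hws]; simp
          have hpv : p ≠ v := fun h' => hvw (h' ▸ hpt)
          have hpa : p ≠ a := fun h' => haw (h' ▸ hpt)
          have hpc : p ≠ x := fun h' => hcw (h' ▸ hpt)
          refine fresh_contra hK hfb4 (by simp) hpt (Ne.symm hbp) ?_
          intro s hs hps
          simp at hs
          rcases hs with rfl | rfl | rfl | rfl
          · exfalso; rw [ht₁s] at hps; simp at hps; tauto
          · exfalso; rw [ht₂s] at hps; simp at hps; tauto
          · exfalso; rw [hs₁s] at hps; simp at hps; tauto
          · rfl
        have hfb : K.filter (fun t => b ∈ t) = {t₁, t₂, s₁} :=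
          tris_eq hsubb (by omega)
        -- valence a = 4 and the triangle {a, c, d}
        have hva4 : valence K a = 4 := by
          rcases (by have := hall_le a haV; have := valence_ge_three hK haV; omega :
            valence K a = 3 ∨ valence K a = 4) with h | h
          · exfalso
            have hfa3 : K.filter (fun t => a ∈ t) = {t₁, t₄, s₁} :=
              tris_eq hsuba (by omega)
            obtain ⟨u', hu'K, hu't₄, hau', hdu'⟩ := other_tri hK ht₄K
              (fun h' => hda h'.symm) hat₄ hdt₄
            have : u' ∈ ({t₁, t₄, s₁} : Finset (Finset ℕ)) :=
              hfa3 ▸ Finset.mem_filter.2 ⟨hu'K, hau'⟩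
            simp at this
            rcases this with rfl | rfl | rfl
            · exact hdt₁ hdu'
            · exact hu't₄ rfl
            · exact hds₁ hdu'
          · exact h
        obtain ⟨t'', ht''K, hat'', ht''n⟩ := fourth_tri hsuba (by omega)
        simp only [Finset.mem_insert, Finset.mem_singleton, not_or] at ht''n
        obtain ⟨h''1, h''4, h''s⟩ := ht''n
        have hfa : K.filter (fun t => a ∈ t) = {t₁, t₄, s₁, t''} := by
          apply tris_eq
          · intro u hu; simp at hu
            rcases hu with rfl | rfl | rfl | rfl
            · exact Finset.mem_filter.2 ⟨ht₁K, hat₁⟩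
            · exact Finset.mem_filter.2 ⟨ht₄K, hat₄⟩
            · exact Finset.mem_filter.2 ⟨hs₁K, has₁⟩
            · exact Finset.mem_filter.2 ⟨ht''K, hat''⟩
          · have : ({t₁, t₄, s₁, t''} : Finset (Finset ℕ)).card = 4 := by
              rw [Finset.card_insert_of_notMem
                  (by simp [Ne.symm ht₄t₁, Ne.symm hs₁t₁, Ne.symm h''1]),
                Finset.card_insert_of_notMem (by simp [Ne.symm hs₁t₄, Ne.symm h''4]),
                Finset.card_insert_of_notMem (by simp [Ne.symm h''s]),
                Finset.card_singleton]
            omega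
        obtain ⟨uc, hucK, hucs₁, hauc, hcuc⟩ := other_tri hK hs₁K (Ne.symm hca) has₁ hcs₁
        have huc'' : uc = t'' := by
          have : uc ∈ ({t₁, t₄, s₁, t''} : Finset (Finset ℕ)) :=
            hfa ▸ Finset.mem_filter.2 ⟨hucK, hauc⟩
          simp at this
          rcases this with rfl | rfl | rfl | rfl
          · exact absurd hcuc hct₁
          · exact absurd hcuc hct₄
          · exact absurd rfl hucs₁
          · rfl
        have hct'' : x ∈ t'' := huc'' ▸ hcuc
        obtain ⟨ud', hud'K, hud't₄, haud', hdud'⟩ := other_tri hK ht₄K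
          (fun h' => hda h'.symm) hat₄ hdt₄
        have hud'' : ud' = t'' := by
          have : ud' ∈ ({t₁, t₄, s₁, t''} : Finset (Finset ℕ)) :=
            hfa ▸ Finset.mem_filter.2 ⟨hud'K, haud'⟩
          simp at this
          rcases this with rfl | rfl | rfl | rfl
          · exact absurd hdud' hdt₁
          · exact absurd rfl hud't₄
          · exact absurd hdud' hds₁
          · rfl
        have hdt'' : d ∈ t'' := hud'' ▸ hdud'
        have ht''s : t'' = {a, x, d} := by
          obtain ⟨z, hza, hzc, hzt, hts⟩ := third_vertex hc3 ht''K (Ne.symm hca) hat'' hct''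
          have hdz : d = z := by
            have := hts ▸ hdt''
            simp at this
            rcases this with h' | h' | h'
            · exact absurd h' hda
            · exact absurd h' hdc
            · exact h'
          rw [hts, ← hdz]
        have hbt'' : b ∉ t'' := by
          rw [ht''s]; simp [Ne.symm hab, Ne.symm hcb, Ne.symm hdb]
        have hvt''n : v ∉ t'' := by
          rw [ht''s]; simp [hva, Ne.symm hcv, Ne.symm hdv]
        have ht''t₃ : t'' ≠ t₃ := fun h' => hat₃ (h' ▸ hat'')
        have ht''t₄ : t'' ≠ t₄ := fun h' => hct₄ (h' ▸ hct'')
        have hsubd : ({t₃, t₄, t''} : Finset (Finset ℕ)) ⊆ K.filter (fun t => d ∈ t) := by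
          intro u hu; simp at hu
          rcases hu with rfl | rfl | rfl
          · exact Finset.mem_filter.2 ⟨ht₃K, hdt₃⟩
          · exact Finset.mem_filter.2 ⟨ht₄K, hdt₄⟩
          · exact Finset.mem_filter.2 ⟨ht''K, hdt''⟩
        have hcardd3 : ({t₃, t₄, t''} : Finset (Finset ℕ)).card = 3 := by
          rw [Finset.card_insert_of_notMem (by simp [Ne.symm ht₄t₃, Ne.symm ht''t₃]),
            Finset.card_insert_of_notMem (by simp [Ne.symm ht''t₄]), Finset.card_singleton]
        have hvd3 : valence K d = 3 := by
          rcases (by have := hall_le d hdV; have := valence_ge_three hK hdV; omega :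
            valence K d = 3 ∨ valence K d = 4) with h | h
          · exact h
          exfalso
          obtain ⟨z, hzK, hdz, hzn⟩ := fourth_tri hsubd (by omega)
          simp only [Finset.mem_insert, Finset.mem_singleton, not_or] at hzn
          obtain ⟨hz3, hz4, hz''⟩ := hzn
          have hvz : v ∉ z := by
            intro hv'
            have : z ∈ ({t₁, t₂, t₃, t₄} : Finset (Finset ℕ)) :=
              hfv ▸ Finset.mem_filter.2 ⟨hzK, hv'⟩
            simp at this
            rcases this with rfl | rfl | rfl | rfl
            · exact hdt₁ hdz
            · exact hdt₂ hdz
            · exact hz3 rfl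
            · exact hz4 rfl
          have haz : a ∉ z := by
            intro ha'
            have : z ∈ ({t₁, t₄, s₁, t''} : Finset (Finset ℕ)) :=
              hfa ▸ Finset.mem_filter.2 ⟨hzK, ha'⟩
            simp at this
            rcases this with rfl | rfl | rfl | rfl
            · exact hdt₁ hdz
            · exact hz4 rfl
            · exact hds₁ hdz
            · exact hz'' rfl
          have hbz : b ∉ z := by
            intro hb'
            have : z ∈ ({t₁, t₂, s₁} : Finset (Finset ℕ)) :=
              hfb ▸ Finset.mem_filter.2 ⟨hzK, hb'⟩
            simp at this
            rcases this with rfl | rfl | rfl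
            · exact hdt₁ hdz
            · exact hdt₂ hdz
            · exact hds₁ hdz
          have hcz : x ∉ z := by
            intro hc'
            rcases two_tris hK ht₃K ht''K (Ne.symm ht''t₃) (Ne.symm hdc) hct₃ hdt₃
              hct'' hdt'' z hzK hc' hdz with h' | h'
            · exact hz3 h'
            · exact hz'' h'
          have hfd4 : K.filter (fun t => d ∈ t) = {t₃, t₄, t'', z} := by
            apply tris_eq
            · intro u hu; simp at hu
              rcases hu with rfl | rfl | rfl | rfl
              · exact Finset.mem_filter.2 ⟨ht₃K, hdt₃⟩
              · exact Finset.mem_filter.2 ⟨ht₄K, hdt₄⟩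
              · exact Finset.mem_filter.2 ⟨ht''K, hdt''⟩
              · exact Finset.mem_filter.2 ⟨hzK, hdz⟩
            · have : ({t₃, t₄, t'', z} : Finset (Finset ℕ)).card = 4 := by
                rw [Finset.card_insert_of_notMem
                    (by simp [Ne.symm ht₄t₃, Ne.symm ht''t₃, Ne.symm hz3]),
                  Finset.card_insert_of_notMem (by simp [Ne.symm ht''t₄, Ne.symm hz4]),
                  Finset.card_insert_of_notMem (by simp [Ne.symm hz'']),
                  Finset.card_singleton]
              omega
          obtain ⟨p, q, hpq', hdp, hdq, hzs⟩ := triangle_shape hc3 hzK hdz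
          have hpt : p ∈ z := by rw [hzs]; simp
          have hpv : p ≠ v := fun h' => hvz (h' ▸ hpt)
          have hpa : p ≠ a := fun h' => haz (h' ▸ hpt)
          have hpb : p ≠ b := fun h' => hbz (h' ▸ hpt)
          have hpc : p ≠ x := fun h' => hcz (h' ▸ hpt)
          refine fresh_contra hK hfd4 (by simp) hpt (Ne.symm hdp) ?_
          intro s hs hps
          simp at hs
          rcases hs with rfl | rfl | rfl | rfl
          · exfalso; rw [ht₃s] at hps; simp at hps; tauto
          · exfalso; rw [ht₄s] at hps; simp at hps; tauto
          · exfalso; rw [ht''s] at hps; simp at hps; tauto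
          · rfl
        have hfd : K.filter (fun t => d ∈ t) = {t₃, t₄, t''} :=
          tris_eq hsubd (by omega)
        have ht''t₂ : t'' ≠ t₂ := fun h' => hdt₂ (h' ▸ hdt'')
        have ht''s₁ : t'' ≠ s₁ := fun h' => hds₁ (h' ▸ hdt'')
        have hfc : K.filter (fun t => x ∈ t) = {t₂, t₃, s₁, t''} := by
          apply tris_eq
          · intro u hu; simp at hu
            rcases hu with rfl | rfl | rfl | rfl
            · exact Finset.mem_filter.2 ⟨ht₂K, hct₂⟩
            · exact Finset.mem_filter.2 ⟨ht₃K, hct₃⟩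
            · exact Finset.mem_filter.2 ⟨hs₁K, hcs₁⟩
            · exact Finset.mem_filter.2 ⟨ht''K, hct''⟩
          · have : ({t₂, t₃, s₁, t''} : Finset (Finset ℕ)).card = 4 := by
              rw [Finset.card_insert_of_notMem
                  (by simp [Ne.symm ht₃t₂, Ne.symm hs₁t₂, Ne.symm ht''t₂]),
                Finset.card_insert_of_notMem (by simp [Ne.symm hs₁t₃, Ne.symm ht''t₃]),
                Finset.card_insert_of_notMem (by simp [Ne.symm ht''s₁]),
                Finset.card_singleton]
            have h4 := hall_le x hcV
            omega
        -- closure over W = {v, a, b, c, d}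
        have hWt₁ : t₁ ⊆ ({v, a, b, x, d} : Finset ℕ) := by
          rw [ht₁s]; intro z hz; simp only [Finset.mem_insert, Finset.mem_singleton] at hz ⊢; rcases hz with rfl | rfl | rfl <;> simp
        have hWt₂ : t₂ ⊆ ({v, a, b, x, d} : Finset ℕ) := by
          rw [ht₂s]; intro z hz; simp only [Finset.mem_insert, Finset.mem_singleton] at hz ⊢; rcases hz with rfl | rfl | rfl <;> simp
        have hWt₃ : t₃ ⊆ ({v, a, b, x, d} : Finset ℕ) := by
          rw [ht₃s]; intro z hz; simp only [Finset.mem_insert, Finset.mem_singleton] at hz ⊢; rcases hz with rfl | rfl | rfl <;> simp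
        have hWt₄ : t₄ ⊆ ({v, a, b, x, d} : Finset ℕ) := by
          rw [ht₄s]; intro z hz; simp only [Finset.mem_insert, Finset.mem_singleton] at hz ⊢; rcases hz with rfl | rfl | rfl <;> simp
        have hWs₁ : s₁ ⊆ ({v, a, b, x, d} : Finset ℕ) := by
          rw [hs₁s]; intro z hz; simp only [Finset.mem_insert, Finset.mem_singleton] at hz ⊢; rcases hz with rfl | rfl | rfl <;> simp
        have hWt'' : t'' ⊆ ({v, a, b, x, d} : Finset ℕ) := by
          rw [ht''s]; intro z hz; simp only [Finset.mem_insert, Finset.mem_singleton] at hz ⊢; rcases hz with rfl | rfl | rfl <;> simp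
        have hW : ∀ w ∈ ({v, a, b, x, d} : Finset ℕ), ∀ t ∈ K, w ∈ t →
            t ⊆ ({v, a, b, x, d} : Finset ℕ) := by
          intro w hw t ht hwt
          simp at hw
          rcases hw with rfl | rfl | rfl | rfl | rfl
          · have : t ∈ ({t₁, t₂, t₃, t₄} : Finset (Finset ℕ)) :=
              hfv ▸ Finset.mem_filter.2 ⟨ht, hwt⟩
            simp at this
            rcases this with rfl | rfl | rfl | rfl
            exacts [hWt₁, hWt₂, hWt₃, hWt₄]
          · have : t ∈ ({t₁, t₄, s₁, t''} : Finset (Finset ℕ)) :=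
              hfa ▸ Finset.mem_filter.2 ⟨ht, hwt⟩
            simp at this
            rcases this with rfl | rfl | rfl | rfl
            exacts [hWt₁, hWt₄, hWs₁, hWt'']
          · have : t ∈ ({t₁, t₂, s₁} : Finset (Finset ℕ)) :=
              hfb ▸ Finset.mem_filter.2 ⟨ht, hwt⟩
            simp at this
            rcases this with rfl | rfl | rfl
            exacts [hWt₁, hWt₂, hWs₁]
          · have : t ∈ ({t₂, t₃, s₁, t''} : Finset (Finset ℕ)) :=
              hfc ▸ Finset.mem_filter.2 ⟨ht, hwt⟩
            simp at this
            rcases this with rfl | rfl | rfl | rfl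
            exacts [hWt₂, hWt₃, hWs₁, hWt'']
          · have : t ∈ ({t₃, t₄, t''} : Finset (Finset ℕ)) :=
              hfd ▸ Finset.mem_filter.2 ⟨ht, hwt⟩
            simp at this
            rcases this with rfl | rfl | rfl
            exacts [hWt₃, hWt₄, hWt'']
        have hsub := vertex_closure hK ht₁K hWt₁ hW
        have h1 := Finset.card_le_card hsub
        have h2 : ({v, a, b, x, d} : Finset ℕ).card ≤ 5 :=
          card_le_succ (card_le_succ (card_le_succ (card_le_succ (by simp))))
        omega
      · -- x ≠ c
        by_cases hxd : x = d
        · -- Branch x = d : the 5-vertex sphere again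
          subst hxd
          have hds₁ : x ∈ s₁ := hxs₁
          have hcs₁ : c ∉ s₁ := by rw [hs₁s]; simp [hca, hcb, Ne.symm hdc]
          have hva3 : valence K a = 3 := by
            rcases (by have := hall_le a haV; have := valence_ge_three hK haV; omega :
              valence K a = 3 ∨ valence K a = 4) with h | h
            · exact h
            exfalso
            obtain ⟨w, hwK, haw', hwn⟩ := fourth_tri hsuba (by omega)
            simp only [Finset.mem_insert, Finset.mem_singleton, not_or] at hwn
            obtain ⟨hw1, hw4, hws'⟩ := hwn
            have hvw : v ∉ w := by
              intro hv'
              have : w ∈ ({t₁, t₂, t₃, t₄} : Finset (Finset ℕ)) :=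
                hfv ▸ Finset.mem_filter.2 ⟨hwK, hv'⟩
              simp at this
              rcases this with rfl | rfl | rfl | rfl
              · exact hw1 rfl
              · exact hat₂ haw'
              · exact hat₃ haw'
              · exact hw4 rfl
            have hbw : b ∉ w := by
              intro hb'
              rcases two_tris hK ht₁K hs₁K (Ne.symm hs₁t₁) hab hat₁ hbt₁ has₁ hbs₁
                w hwK haw' hb' with h' | h'
              · exact hw1 h'
              · exact hws' h'
            have hdw : x ∉ w := by
              intro hx'
              rcases two_tris hK ht₄K hs₁K (Ne.symm hs₁t₄) (fun h' => hda h'.symm)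
                hat₄ hdt₄ has₁ hds₁ w hwK haw' hx' with h' | h'
              · exact hw4 h'
              · exact hws' h'
            have hfa4 : K.filter (fun t => a ∈ t) = {t₁, t₄, s₁, w} := by
              apply tris_eq
              · intro u hu; simp at hu
                rcases hu with rfl | rfl | rfl | rfl
                · exact Finset.mem_filter.2 ⟨ht₁K, hat₁⟩
                · exact Finset.mem_filter.2 ⟨ht₄K, hat₄⟩
                · exact Finset.mem_filter.2 ⟨hs₁K, has₁⟩
                · exact Finset.mem_filter.2 ⟨hwK, haw'⟩
              · have : ({t₁, t₄, s₁, w} : Finset (Finset ℕ)).card = 4 := by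
                  rw [Finset.card_insert_of_notMem
                      (by simp [Ne.symm ht₄t₁, Ne.symm hs₁t₁, Ne.symm hw1]),
                    Finset.card_insert_of_notMem (by simp [Ne.symm hs₁t₄, Ne.symm hw4]),
                    Finset.card_insert_of_notMem (by simp [Ne.symm hws']),
                    Finset.card_singleton]
                omega
            obtain ⟨p, q, hpq', hap, haq, hws2⟩ := triangle_shape hc3 hwK haw'
            have hpt : p ∈ w := by rw [hws2]; simp
            have hpv : p ≠ v := fun h' => hvw (h' ▸ hpt)
            have hpb : p ≠ b := fun h' => hbw (h' ▸ hpt)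
            have hpd : p ≠ x := fun h' => hdw (h' ▸ hpt)
            refine fresh_contra hK hfa4 (by simp) hpt (Ne.symm hap) ?_
            intro s hs hps
            simp at hs
            rcases hs with rfl | rfl | rfl | rfl
            · exfalso; rw [ht₁s] at hps; simp at hps; tauto
            · exfalso; rw [ht₄s] at hps; simp at hps; tauto
            · exfalso; rw [hs₁s] at hps; simp at hps; tauto
            · rfl
          have hfa : K.filter (fun t => a ∈ t) = {t₁, t₄, s₁} :=
            tris_eq hsuba (by omega)
          have hvb4 : valence K b = 4 := by
            rcases (by have := hall_le b hbV; have := valence_ge_three hK hbV; omega :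
              valence K b = 3 ∨ valence K b = 4) with h | h
            · exfalso
              have hfb3 : K.filter (fun t => b ∈ t) = {t₁, t₂, s₁} :=
                tris_eq hsubb (by omega)
              obtain ⟨uc, hucK, huct₂, hbuc, hcuc⟩ := other_tri hK ht₂K (Ne.symm hcb)
                hbt₂ hct₂
              have : uc ∈ ({t₁, t₂, s₁} : Finset (Finset ℕ)) :=
                hfb3 ▸ Finset.mem_filter.2 ⟨hucK, hbuc⟩
              simp at this
              rcases this with rfl | rfl | rfl
              · exact hct₁ hcuc
              · exact huct₂ rfl
              · exact hcs₁ hcuc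
            · exact h
          obtain ⟨w, hwK, hbw, hwn⟩ := fourth_tri hsubb (by omega)
          simp only [Finset.mem_insert, Finset.mem_singleton, not_or] at hwn
          obtain ⟨hw1, hw2, hws'⟩ := hwn
          have hfb : K.filter (fun t => b ∈ t) = {t₁, t₂, s₁, w} := by
            apply tris_eq
            · intro u hu; simp at hu
              rcases hu with rfl | rfl | rfl | rfl
              · exact Finset.mem_filter.2 ⟨ht₁K, hbt₁⟩
              · exact Finset.mem_filter.2 ⟨ht₂K, hbt₂⟩
              · exact Finset.mem_filter.2 ⟨hs₁K, hbs₁⟩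
              · exact Finset.mem_filter.2 ⟨hwK, hbw⟩
            · have : ({t₁, t₂, s₁, w} : Finset (Finset ℕ)).card = 4 := by
                rw [Finset.card_insert_of_notMem
                    (by simp [Ne.symm ht₂t₁, Ne.symm hs₁t₁, Ne.symm hw1]),
                  Finset.card_insert_of_notMem (by simp [Ne.symm hs₁t₂, Ne.symm hw2]),
                  Finset.card_insert_of_notMem (by simp [Ne.symm hws']),
                  Finset.card_singleton]
              omega
          obtain ⟨uc, hucK, huct₂, hbuc, hcuc⟩ := other_tri hK ht₂K (Ne.symm hcb) hbt₂ hct₂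
          have hucw : uc = w := by
            have : uc ∈ ({t₁, t₂, s₁, w} : Finset (Finset ℕ)) :=
              hfb ▸ Finset.mem_filter.2 ⟨hucK, hbuc⟩
            simp at this
            rcases this with rfl | rfl | rfl | rfl
            · exact absurd hcuc hct₁
            · exact absurd rfl huct₂
            · exact absurd hcuc hcs₁
            · rfl
          have hcw : c ∈ w := hucw ▸ hcuc
          obtain ⟨ux, huxK, huxs₁, hbux, hxux⟩ := other_tri hK hs₁K (Ne.symm hdb) hbs₁ hds₁
          have huxw : ux = w := by
            have : ux ∈ ({t₁, t₂, s₁, w} : Finset (Finset ℕ)) :=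
              hfb ▸ Finset.mem_filter.2 ⟨huxK, hbux⟩
            simp at this
            rcases this with rfl | rfl | rfl | rfl
            · exact absurd hxux hdt₁
            · exact absurd hxux hdt₂
            · exact absurd rfl huxs₁
            · rfl
          have hxw : x ∈ w := huxw ▸ hxux
          have hws2 : w = {b, c, x} := by
            obtain ⟨z, hzb, hzc, hzt, hts⟩ := third_vertex hc3 hwK (Ne.symm hcb) hbw hcw
            have hxz : x = z := by
              have := hts ▸ hxw
              simp at this
              rcases this with h' | h' | h'
              · exact absurd h' hdb
              · exact absurd h' hdc
              · exact h'
            rw [hts, ← hxz]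
          have hvw : v ∉ w := by rw [hws2]; simp [hvb, Ne.symm hcv, Ne.symm hdv]
          have haw : a ∉ w := by
            rw [hws2]
            simp [hab, Ne.symm hca, (show a ≠ x from fun h' => hda h'.symm)]
          have hwt₂ : w ≠ t₂ := fun h' => hdt₂ (h' ▸ hxw)
          have hwt₃ : w ≠ t₃ := fun h' => hbt₃ (h' ▸ hbw)
          have hwt₄ : w ≠ t₄ := fun h' => hbt₄ (h' ▸ hbw)
          have hfd : K.filter (fun t => x ∈ t) = {t₃, t₄, s₁, w} := by
            apply tris_eq
            · intro u hu; simp at hu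
              rcases hu with rfl | rfl | rfl | rfl
              · exact Finset.mem_filter.2 ⟨ht₃K, hdt₃⟩
              · exact Finset.mem_filter.2 ⟨ht₄K, hdt₄⟩
              · exact Finset.mem_filter.2 ⟨hs₁K, hds₁⟩
              · exact Finset.mem_filter.2 ⟨hwK, hxw⟩
            · have : ({t₃, t₄, s₁, w} : Finset (Finset ℕ)).card = 4 := by
                rw [Finset.card_insert_of_notMem
                    (by simp [Ne.symm ht₄t₃, Ne.symm hs₁t₃, Ne.symm hwt₃]),
                  Finset.card_insert_of_notMem (by simp [Ne.symm hs₁t₄, Ne.symm hwt₄]),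
                  Finset.card_insert_of_notMem (by simp [(show s₁ ≠ w from fun h' => hws' h'.symm)]),
                  Finset.card_singleton]
              have h4 := hall_le x hdV
              omega
          have hsubc : ({t₂, t₃, w} : Finset (Finset ℕ)) ⊆ K.filter (fun t => c ∈ t) := by
            intro u hu; simp at hu
            rcases hu with rfl | rfl | rfl
            · exact Finset.mem_filter.2 ⟨ht₂K, hct₂⟩
            · exact Finset.mem_filter.2 ⟨ht₃K, hct₃⟩
            · exact Finset.mem_filter.2 ⟨hwK, hcw⟩
          have hcardc3 : ({t₂, t₃, w} : Finset (Finset ℕ)).card = 3 := by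
            rw [Finset.card_insert_of_notMem (by simp [Ne.symm ht₃t₂, Ne.symm hwt₂]),
              Finset.card_insert_of_notMem (by simp [Ne.symm hwt₃]), Finset.card_singleton]
          have hvc3 : valence K c = 3 := by
            rcases (by have := hall_le c hcV; have := valence_ge_three hK hcV; omega :
              valence K c = 3 ∨ valence K c = 4) with h | h
            · exact h
            exfalso
            obtain ⟨z, hzK, hcz, hzn⟩ := fourth_tri hsubc (by omega)
            simp only [Finset.mem_insert, Finset.mem_singleton, not_or] at hzn
            obtain ⟨hz2, hz3, hzw⟩ := hzn
            have hvz : v ∉ z := by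
              intro hv'
              have : z ∈ ({t₁, t₂, t₃, t₄} : Finset (Finset ℕ)) :=
                hfv ▸ Finset.mem_filter.2 ⟨hzK, hv'⟩
              simp at this
              rcases this with rfl | rfl | rfl | rfl
              · exact hct₁ hcz
              · exact hz2 rfl
              · exact hz3 rfl
              · exact hct₄ hcz
            have hbz : b ∉ z := by
              intro hb'
              have : z ∈ ({t₁, t₂, s₁, w} : Finset (Finset ℕ)) :=
                hfb ▸ Finset.mem_filter.2 ⟨hzK, hb'⟩
              simp at this
              rcases this with rfl | rfl | rfl | rfl
              · exact hct₁ hcz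
              · exact hz2 rfl
              · exact hcs₁ hcz
              · exact hzw rfl
            have hxz : x ∉ z := by
              intro hx'
              have : z ∈ ({t₃, t₄, s₁, w} : Finset (Finset ℕ)) :=
                hfd ▸ Finset.mem_filter.2 ⟨hzK, hx'⟩
              simp at this
              rcases this with rfl | rfl | rfl | rfl
              · exact hz3 rfl
              · exact hct₄ hcz
              · exact hcs₁ hcz
              · exact hzw rfl
            have haz : a ∉ z := by
              intro ha'
              have : z ∈ ({t₁, t₄, s₁} : Finset (Finset ℕ)) :=
                hfa ▸ Finset.mem_filter.2 ⟨hzK, ha'⟩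
              simp at this
              rcases this with rfl | rfl | rfl
              · exact hct₁ hcz
              · exact hct₄ hcz
              · exact hcs₁ hcz
            have hfc4 : K.filter (fun t => c ∈ t) = {t₂, t₃, w, z} := by
              apply tris_eq
              · intro u hu; simp at hu
                rcases hu with rfl | rfl | rfl | rfl
                · exact Finset.mem_filter.2 ⟨ht₂K, hct₂⟩
                · exact Finset.mem_filter.2 ⟨ht₃K, hct₃⟩
                · exact Finset.mem_filter.2 ⟨hwK, hcw⟩
                · exact Finset.mem_filter.2 ⟨hzK, hcz⟩
              · have : ({t₂, t₃, w, z} : Finset (Finset ℕ)).card = 4 := by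
                  rw [Finset.card_insert_of_notMem
                      (by simp [Ne.symm ht₃t₂, Ne.symm hwt₂,
                        (show t₂ ≠ z from fun h' => hz2 h'.symm)]),
                    Finset.card_insert_of_notMem
                      (by simp [Ne.symm hwt₃, (show t₃ ≠ z from fun h' => hz3 h'.symm)]),
                    Finset.card_insert_of_notMem
                      (by simp [(show w ≠ z from fun h' => hzw h'.symm)]),
                    Finset.card_singleton]
                omega
            obtain ⟨p, q, hpq', hcp, hcq, hzs⟩ := triangle_shape hc3 hzK hcz
            have hpt : p ∈ z := by rw [hzs]; simp
            have hpv : p ≠ v := fun h' => hvz (h' ▸ hpt)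
            have hpa : p ≠ a := fun h' => haz (h' ▸ hpt)
            have hpb : p ≠ b := fun h' => hbz (h' ▸ hpt)
            have hpx : p ≠ x := fun h' => hxz (h' ▸ hpt)
            refine fresh_contra hK hfc4 (by simp) hpt (Ne.symm hcp) ?_
            intro s hs hps
            simp at hs
            rcases hs with rfl | rfl | rfl | rfl
            · exfalso; rw [ht₂s] at hps; simp at hps; tauto
            · exfalso; rw [ht₃s] at hps; simp at hps; tauto
            · exfalso; rw [hws2] at hps; simp at hps; tauto
            · rfl
          have hfc : K.filter (fun t => c ∈ t) = {t₂, t₃, w} :=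
            tris_eq hsubc (by omega)
          have hWt₁ : t₁ ⊆ ({v, a, b, c, x} : Finset ℕ) := by
            rw [ht₁s]; intro z hz; simp only [Finset.mem_insert, Finset.mem_singleton] at hz ⊢; rcases hz with rfl | rfl | rfl <;> simp
          have hWt₂ : t₂ ⊆ ({v, a, b, c, x} : Finset ℕ) := by
            rw [ht₂s]; intro z hz; simp only [Finset.mem_insert, Finset.mem_singleton] at hz ⊢; rcases hz with rfl | rfl | rfl <;> simp
          have hWt₃ : t₃ ⊆ ({v, a, b, c, x} : Finset ℕ) := by
            rw [ht₃s]; intro z hz; simp only [Finset.mem_insert, Finset.mem_singleton] at hz ⊢; rcases hz with rfl | rfl | rfl <;> simp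
          have hWt₄ : t₄ ⊆ ({v, a, b, c, x} : Finset ℕ) := by
            rw [ht₄s]; intro z hz; simp only [Finset.mem_insert, Finset.mem_singleton] at hz ⊢; rcases hz with rfl | rfl | rfl <;> simp
          have hWs₁ : s₁ ⊆ ({v, a, b, c, x} : Finset ℕ) := by
            rw [hs₁s]; intro z hz; simp only [Finset.mem_insert, Finset.mem_singleton] at hz ⊢; rcases hz with rfl | rfl | rfl <;> simp
          have hWw : w ⊆ ({v, a, b, c, x} : Finset ℕ) := by
            rw [hws2]; intro z hz; simp only [Finset.mem_insert, Finset.mem_singleton] at hz ⊢; rcases hz with rfl | rfl | rfl <;> simp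
          have hW : ∀ w' ∈ ({v, a, b, c, x} : Finset ℕ), ∀ t ∈ K, w' ∈ t →
              t ⊆ ({v, a, b, c, x} : Finset ℕ) := by
            intro w' hw' t ht hwt
            simp at hw'
            rcases hw' with rfl | rfl | rfl | rfl | rfl
            · have : t ∈ ({t₁, t₂, t₃, t₄} : Finset (Finset ℕ)) :=
                hfv ▸ Finset.mem_filter.2 ⟨ht, hwt⟩
              simp at this
              rcases this with rfl | rfl | rfl | rfl
              exacts [hWt₁, hWt₂, hWt₃, hWt₄]
            · have : t ∈ ({t₁, t₄, s₁} : Finset (Finset ℕ)) :=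
                hfa ▸ Finset.mem_filter.2 ⟨ht, hwt⟩
              simp at this
              rcases this with rfl | rfl | rfl
              exacts [hWt₁, hWt₄, hWs₁]
            · have : t ∈ ({t₁, t₂, s₁, w} : Finset (Finset ℕ)) :=
                hfb ▸ Finset.mem_filter.2 ⟨ht, hwt⟩
              simp at this
              rcases this with rfl | rfl | rfl | rfl
              exacts [hWt₁, hWt₂, hWs₁, hWw]
            · have : t ∈ ({t₂, t₃, w} : Finset (Finset ℕ)) :=
                hfc ▸ Finset.mem_filter.2 ⟨ht, hwt⟩
              simp at this
              rcases this with rfl | rfl | rfl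
              exacts [hWt₂, hWt₃, hWw]
            · have : t ∈ ({t₃, t₄, s₁, w} : Finset (Finset ℕ)) :=
                hfd ▸ Finset.mem_filter.2 ⟨ht, hwt⟩
              simp at this
              rcases this with rfl | rfl | rfl | rfl
              exacts [hWt₃, hWt₄, hWs₁, hWw]
          have hsub := vertex_closure hK ht₁K hWt₁ hW
          have h1 := Finset.card_le_card hsub
          have h2 : ({v, a, b, c, x} : Finset ℕ).card ≤ 5 :=
            card_le_succ (card_le_succ (card_le_succ (card_le_succ (by simp))))
          omega
        · -- Branch : x is a sixth vertex, the octahedron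
          have hxt₁ : x ∉ t₁ := by rw [ht₁s]; simp [hxv, hxa, hxb]
          have hxt₂ : x ∉ t₂ := by rw [ht₂s]; simp [hxv, hxb, hxc]
          have hxt₃ : x ∉ t₃ := by rw [ht₃s]; simp [hxv, hxc, hxd]
          have hxt₄ : x ∉ t₄ := by rw [ht₄s]; simp [hxv, hxa, hxd]
          have hcs₁ : c ∉ s₁ := by
            rw [hs₁s]; simp [hca, hcb, (show c ≠ x from fun h' => hxc h'.symm)]
          have hds₁ : d ∉ s₁ := by
            rw [hs₁s]; simp [hda, hdb, (show d ≠ x from fun h' => hxd h'.symm)]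
          have hxV : x ∈ vertices K := mem_vertices.2 ⟨s₁, hs₁K, hxs₁⟩
          -- valence b = 4 and w = {b, c, x}
          have hvb4 : valence K b = 4 := by
            rcases (by have := hall_le b hbV; have := valence_ge_three hK hbV; omega :
              valence K b = 3 ∨ valence K b = 4) with h | h
            · exfalso
              have hfb3 : K.filter (fun t => b ∈ t) = {t₁, t₂, s₁} :=
                tris_eq hsubb (by omega)
              obtain ⟨uc, hucK, huct₂, hbuc, hcuc⟩ := other_tri hK ht₂K (Ne.symm hcb)
                hbt₂ hct₂
              have : uc ∈ ({t₁, t₂, s₁} : Finset (Finset ℕ)) :=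
                hfb3 ▸ Finset.mem_filter.2 ⟨hucK, hbuc⟩
              simp at this
              rcases this with rfl | rfl | rfl
              · exact hct₁ hcuc
              · exact huct₂ rfl
              · exact hcs₁ hcuc
            · exact h
          obtain ⟨w, hwK, hbw, hwn⟩ := fourth_tri hsubb (by omega)
          simp only [Finset.mem_insert, Finset.mem_singleton, not_or] at hwn
          obtain ⟨hw1, hw2, hws'⟩ := hwn
          have hfb : K.filter (fun t => b ∈ t) = {t₁, t₂, s₁, w} := by
            apply tris_eq
            · intro u hu; simp at hu
              rcases hu with rfl | rfl | rfl | rfl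
              · exact Finset.mem_filter.2 ⟨ht₁K, hbt₁⟩
              · exact Finset.mem_filter.2 ⟨ht₂K, hbt₂⟩
              · exact Finset.mem_filter.2 ⟨hs₁K, hbs₁⟩
              · exact Finset.mem_filter.2 ⟨hwK, hbw⟩
            · have : ({t₁, t₂, s₁, w} : Finset (Finset ℕ)).card = 4 := by
                rw [Finset.card_insert_of_notMem
                    (by simp [Ne.symm ht₂t₁, Ne.symm hs₁t₁, Ne.symm hw1]),
                  Finset.card_insert_of_notMem (by simp [Ne.symm hs₁t₂, Ne.symm hw2]),
                  Finset.card_insert_of_notMem (by simp [Ne.symm hws']),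
                  Finset.card_singleton]
              omega
          obtain ⟨uc, hucK, huct₂, hbuc, hcuc⟩ := other_tri hK ht₂K (Ne.symm hcb) hbt₂ hct₂
          have hucw : uc = w := by
            have : uc ∈ ({t₁, t₂, s₁, w} : Finset (Finset ℕ)) :=
              hfb ▸ Finset.mem_filter.2 ⟨hucK, hbuc⟩
            simp at this
            rcases this with rfl | rfl | rfl | rfl
            · exact absurd hcuc hct₁
            · exact absurd rfl huct₂
            · exact absurd hcuc hcs₁
            · rfl
          have hcw : c ∈ w := hucw ▸ hcuc
          obtain ⟨ux, huxK, huxs₁, hbux, hxux⟩ := other_tri hK hs₁K (Ne.symm hxb) hbs₁ hxs₁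
          have huxw : ux = w := by
            have : ux ∈ ({t₁, t₂, s₁, w} : Finset (Finset ℕ)) :=
              hfb ▸ Finset.mem_filter.2 ⟨huxK, hbux⟩
            simp at this
            rcases this with rfl | rfl | rfl | rfl
            · exact absurd hxux hxt₁
            · exact absurd hxux hxt₂
            · exact absurd rfl huxs₁
            · rfl
          have hxw : x ∈ w := huxw ▸ hxux
          have hws2 : w = {b, c, x} := by
            obtain ⟨z, hzb, hzc, hzt, hts⟩ := third_vertex hc3 hwK (Ne.symm hcb) hbw hcw
            have hxz : x = z := by
              have := hts ▸ hxw
              simp at this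
              rcases this with h' | h' | h'
              · exact absurd h' hxb
              · exact absurd h' hxc
              · exact h'
            rw [hts, ← hxz]
          have hvw : v ∉ w := by rw [hws2]; simp [hvb, Ne.symm hcv, Ne.symm hxv]
          have haw : a ∉ w := by rw [hws2]; simp [hab, Ne.symm hca, Ne.symm hxa]
          have hdw : d ∉ w := by
            rw [hws2]; simp [hdb, hdc, (show d ≠ x from fun h' => hxd h'.symm)]
          have hwt₁ : w ≠ t₁ := hw1
          have hwt₂ : w ≠ t₂ := fun h' => hxt₂ (h' ▸ hxw)
          have hwt₃ : w ≠ t₃ := fun h' => hbt₃ (h' ▸ hbw)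
          have hwt₄ : w ≠ t₄ := fun h' => hbt₄ (h' ▸ hbw)
          -- valence a = 4 and u = {a, d, x}
          have hva4 : valence K a = 4 := by
            rcases (by have := hall_le a haV; have := valence_ge_three hK haV; omega :
              valence K a = 3 ∨ valence K a = 4) with h | h
            · exfalso
              have hfa3 : K.filter (fun t => a ∈ t) = {t₁, t₄, s₁} :=
                tris_eq hsuba (by omega)
              obtain ⟨ud', hud'K, hud't₄, haud', hdud'⟩ := other_tri hK ht₄K
                (fun h' => hda h'.symm) hat₄ hdt₄
              have : ud' ∈ ({t₁, t₄, s₁} : Finset (Finset ℕ)) :=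
                hfa3 ▸ Finset.mem_filter.2 ⟨hud'K, haud'⟩
              simp at this
              rcases this with rfl | rfl | rfl
              · exact hdt₁ hdud'
              · exact hud't₄ rfl
              · exact hds₁ hdud'
            · exact h
          obtain ⟨u, huK', hau, hun⟩ := fourth_tri hsuba (by omega)
          simp only [Finset.mem_insert, Finset.mem_singleton, not_or] at hun
          obtain ⟨hu1, hu4, hus'⟩ := hun
          have hfa : K.filter (fun t => a ∈ t) = {t₁, t₄, s₁, u} := by
            apply tris_eq
            · intro u' hu'; simp at hu'
              rcases hu' with rfl | rfl | rfl | rfl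
              · exact Finset.mem_filter.2 ⟨ht₁K, hat₁⟩
              · exact Finset.mem_filter.2 ⟨ht₄K, hat₄⟩
              · exact Finset.mem_filter.2 ⟨hs₁K, has₁⟩
              · exact Finset.mem_filter.2 ⟨huK', hau⟩
            · have : ({t₁, t₄, s₁, u} : Finset (Finset ℕ)).card = 4 := by
                rw [Finset.card_insert_of_notMem
                    (by simp [Ne.symm ht₄t₁, Ne.symm hs₁t₁, Ne.symm hu1]),
                  Finset.card_insert_of_notMem (by simp [Ne.symm hs₁t₄, Ne.symm hu4]),
                  Finset.card_insert_of_notMem (by simp [Ne.symm hus']),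
                  Finset.card_singleton]
              omega
          obtain ⟨ud', hud'K, hud't₄, haud', hdud'⟩ := other_tri hK ht₄K
            (fun h' => hda h'.symm) hat₄ hdt₄
          have hud'u : ud' = u := by
            have : ud' ∈ ({t₁, t₄, s₁, u} : Finset (Finset ℕ)) :=
              hfa ▸ Finset.mem_filter.2 ⟨hud'K, haud'⟩
            simp at this
            rcases this with rfl | rfl | rfl | rfl
            · exact absurd hdud' hdt₁
            · exact absurd rfl hud't₄
            · exact absurd hdud' hds₁
            · rfl
          have hdu : d ∈ u := hud'u ▸ hdud'
          obtain ⟨ux', hux'K, hux's₁, haux', hxux'⟩ := other_tri hK hs₁K (Ne.symm hxa)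
            has₁ hxs₁
          have hux'u : ux' = u := by
            have : ux' ∈ ({t₁, t₄, s₁, u} : Finset (Finset ℕ)) :=
              hfa ▸ Finset.mem_filter.2 ⟨hux'K, haux'⟩
            simp at this
            rcases this with rfl | rfl | rfl | rfl
            · exact absurd hxux' hxt₁
            · exact absurd hxux' hxt₄
            · exact absurd rfl hux's₁
            · rfl
          have hxu : x ∈ u := hux'u ▸ hxux'
          have hus2 : u = {a, d, x} := by
            obtain ⟨z, hza, hzd, hzt, hts⟩ := third_vertex hc3 huK'
              (fun h' => hda h'.symm) hau hdu
            have hxz : x = z := by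
              have := hts ▸ hxu
              simp at this
              rcases this with h' | h' | h'
              · exact absurd h' hxa
              · exact absurd h' hxd
              · exact h'
            rw [hts, ← hxz]
          have hvu : v ∉ u := by rw [hus2]; simp [hva, Ne.symm hdv, Ne.symm hxv]
          have hbu : b ∉ u := by
            rw [hus2]; simp [Ne.symm hab, Ne.symm hdb, Ne.symm hxb]
          have hcu : c ∉ u := by
            rw [hus2]
            simp [hca, Ne.symm hdc, (show c ≠ x from fun h' => hxc h'.symm)]
          have hut₃ : u ≠ t₃ := fun h' => hat₃ (h' ▸ hau)
          have hut₄ : u ≠ t₄ := fun h' => hxt₄ (h' ▸ hxu)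
          have huw : u ≠ w := fun h' => haw (h' ▸ hau)
          have hut₂ : u ≠ t₂ := fun h' => hat₂ (h' ▸ hau)
          -- valence d = 4 and z = {d, c, x}
          have hsubd : ({t₃, t₄, u} : Finset (Finset ℕ)) ⊆ K.filter (fun t => d ∈ t) := by
            intro u' hu'; simp at hu'
            rcases hu' with rfl | rfl | rfl
            · exact Finset.mem_filter.2 ⟨ht₃K, hdt₃⟩
            · exact Finset.mem_filter.2 ⟨ht₄K, hdt₄⟩
            · exact Finset.mem_filter.2 ⟨huK', hdu⟩
          have hcardd3 : ({t₃, t₄, u} : Finset (Finset ℕ)).card = 3 := by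
            rw [Finset.card_insert_of_notMem (by simp [Ne.symm ht₄t₃, Ne.symm hut₃]),
              Finset.card_insert_of_notMem (by simp [Ne.symm hut₄]), Finset.card_singleton]
          have hvd4 : valence K d = 4 := by
            rcases (by have := hall_le d hdV; have := valence_ge_three hK hdV; omega :
              valence K d = 3 ∨ valence K d = 4) with h | h
            · exfalso
              have hfd3 : K.filter (fun t => d ∈ t) = {t₃, t₄, u} :=
                tris_eq hsubd (by omega)
              obtain ⟨zc, hzcK, hzct₃, hdzc, hczc⟩ := other_tri hK ht₃K hdc hdt₃ hct₃
              have : zc ∈ ({t₃, t₄, u} : Finset (Finset ℕ)) :=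
                hfd3 ▸ Finset.mem_filter.2 ⟨hzcK, hdzc⟩
              simp at this
              rcases this with rfl | rfl | rfl
              · exact hzct₃ rfl
              · exact hct₄ hczc
              · exact hcu hczc
            · exact h
          obtain ⟨z, hzK, hdz, hzn⟩ := fourth_tri hsubd (by omega)
          simp only [Finset.mem_insert, Finset.mem_singleton, not_or] at hzn
          obtain ⟨hz3, hz4, hzu⟩ := hzn
          have hfd : K.filter (fun t => d ∈ t) = {t₃, t₄, u, z} := by
            apply tris_eq
            · intro u' hu'; simp at hu'
              rcases hu' with rfl | rfl | rfl | rfl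
              · exact Finset.mem_filter.2 ⟨ht₃K, hdt₃⟩
              · exact Finset.mem_filter.2 ⟨ht₄K, hdt₄⟩
              · exact Finset.mem_filter.2 ⟨huK', hdu⟩
              · exact Finset.mem_filter.2 ⟨hzK, hdz⟩
            · have : ({t₃, t₄, u, z} : Finset (Finset ℕ)).card = 4 := by
                rw [Finset.card_insert_of_notMem
                    (by simp [Ne.symm ht₄t₃, Ne.symm hut₃, Ne.symm hz3]),
                  Finset.card_insert_of_notMem (by simp [Ne.symm hut₄, Ne.symm hz4]),
                  Finset.card_insert_of_notMem (by simp [Ne.symm hzu]),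
                  Finset.card_singleton]
              omega
          obtain ⟨zc, hzcK, hzct₃, hdzc, hczc⟩ := other_tri hK ht₃K hdc hdt₃ hct₃
          have hzcz : zc = z := by
            have : zc ∈ ({t₃, t₄, u, z} : Finset (Finset ℕ)) :=
              hfd ▸ Finset.mem_filter.2 ⟨hzcK, hdzc⟩
            simp at this
            rcases this with rfl | rfl | rfl | rfl
            · exact absurd rfl hzct₃
            · exact absurd hczc hct₄
            · exact absurd hczc hcu
            · rfl
          have hcz : c ∈ z := hzcz ▸ hczc
          obtain ⟨zx, hzxK, hzxu, hdzx, hxzx⟩ := other_tri hK huK'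
            (show d ≠ x from fun h' => hxd h'.symm) hdu hxu
          have hzxz : zx = z := by
            have : zx ∈ ({t₃, t₄, u, z} : Finset (Finset ℕ)) :=
              hfd ▸ Finset.mem_filter.2 ⟨hzxK, hdzx⟩
            simp at this
            rcases this with rfl | rfl | rfl | rfl
            · exact absurd hxzx hxt₃
            · exact absurd hxzx hxt₄
            · exact absurd rfl hzxu
            · rfl
          have hxz : x ∈ z := hzxz ▸ hxzx
          have hzs2 : z = {d, c, x} := by
            obtain ⟨z', hz'd, hz'c, hz't, hts⟩ := third_vertex hc3 hzK hdc hdz hcz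
            have hxz' : x = z' := by
              have := hts ▸ hxz
              simp at this
              rcases this with h' | h' | h'
              · exact absurd h' hxd
              · exact absurd h' hxc
              · exact h'
            rw [hts, ← hxz']
          have hvz : v ∉ z := by rw [hzs2]; simp [Ne.symm hdv, Ne.symm hcv, Ne.symm hxv]
          have haz : a ∉ z := by
            rw [hzs2]
            simp [(show a ≠ d from fun h' => hda h'.symm), Ne.symm hca, Ne.symm hxa]
          have hbz : b ∉ z := by
            rw [hzs2]; simp [Ne.symm hdb, Ne.symm hcb, Ne.symm hxb]
          have hzt₂ : z ≠ t₂ := fun h' => hdt₂ (h' ▸ hdz)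
          have hzt₃ : z ≠ t₃ := hz3
          have hzw : z ≠ w := fun h' => hdw (h' ▸ hdz)
          have hzs₁ : z ≠ s₁ := fun h' => hds₁ (h' ▸ hdz)
          -- the filter at c
          have hfc : K.filter (fun t => c ∈ t) = {t₂, t₃, w, z} := by
            apply tris_eq
            · intro u' hu'; simp at hu'
              rcases hu' with rfl | rfl | rfl | rfl
              · exact Finset.mem_filter.2 ⟨ht₂K, hct₂⟩
              · exact Finset.mem_filter.2 ⟨ht₃K, hct₃⟩
              · exact Finset.mem_filter.2 ⟨hwK, hcw⟩
              · exact Finset.mem_filter.2 ⟨hzK, hcz⟩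
            · have : ({t₂, t₃, w, z} : Finset (Finset ℕ)).card = 4 := by
                rw [Finset.card_insert_of_notMem
                    (by simp [Ne.symm ht₃t₂, Ne.symm hwt₂, Ne.symm hzt₂]),
                  Finset.card_insert_of_notMem (by simp [Ne.symm hwt₃, Ne.symm hzt₃]),
                  Finset.card_insert_of_notMem (by simp [Ne.symm hzw]),
                  Finset.card_singleton]
              have h4 := hall_le c hcV
              omega
          -- the filter at x
          have hws₁ : w ≠ s₁ := fun h' => hcs₁ (h' ▸ hcw)
          have hus₁ : u ≠ s₁ := hus'
          have hfx : K.filter (fun t => x ∈ t) = {s₁, w, u, z} := by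
            apply tris_eq
            · intro u' hu'; simp at hu'
              rcases hu' with rfl | rfl | rfl | rfl
              · exact Finset.mem_filter.2 ⟨hs₁K, hxs₁⟩
              · exact Finset.mem_filter.2 ⟨hwK, hxw⟩
              · exact Finset.mem_filter.2 ⟨huK', hxu⟩
              · exact Finset.mem_filter.2 ⟨hzK, hxz⟩
            · have : ({s₁, w, u, z} : Finset (Finset ℕ)).card = 4 := by
                rw [Finset.card_insert_of_notMem
                    (by simp [Ne.symm hws₁, Ne.symm hus₁, Ne.symm hzs₁]),
                  Finset.card_insert_of_notMem (by simp [Ne.symm huw, Ne.symm hzw]),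
                  Finset.card_insert_of_notMem (by simp [(show u ≠ z from
                    fun h' => hcu (h'.symm ▸ hcz))]),
                  Finset.card_singleton]
              have h4 := hall_le x hxV
              omega
          -- closure over the six vertices
          have hWt₁ : t₁ ⊆ ({v, a, b, c, d, x} : Finset ℕ) := by
            rw [ht₁s]; intro z' hz'; simp only [Finset.mem_insert, Finset.mem_singleton] at hz' ⊢; rcases hz' with rfl | rfl | rfl <;> simp
          have hWt₂ : t₂ ⊆ ({v, a, b, c, d, x} : Finset ℕ) := by
            rw [ht₂s]; intro z' hz'; simp only [Finset.mem_insert, Finset.mem_singleton] at hz' ⊢; rcases hz' with rfl | rfl | rfl <;> simp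
          have hWt₃ : t₃ ⊆ ({v, a, b, c, d, x} : Finset ℕ) := by
            rw [ht₃s]; intro z' hz'; simp only [Finset.mem_insert, Finset.mem_singleton] at hz' ⊢; rcases hz' with rfl | rfl | rfl <;> simp
          have hWt₄ : t₄ ⊆ ({v, a, b, c, d, x} : Finset ℕ) := by
            rw [ht₄s]; intro z' hz'; simp only [Finset.mem_insert, Finset.mem_singleton] at hz' ⊢; rcases hz' with rfl | rfl | rfl <;> simp
          have hWs₁ : s₁ ⊆ ({v, a, b, c, d, x} : Finset ℕ) := by
            rw [hs₁s]; intro z' hz'; simp only [Finset.mem_insert, Finset.mem_singleton] at hz' ⊢; rcases hz' with rfl | rfl | rfl <;> simp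
          have hWw : w ⊆ ({v, a, b, c, d, x} : Finset ℕ) := by
            rw [hws2]; intro z' hz'; simp only [Finset.mem_insert, Finset.mem_singleton] at hz' ⊢; rcases hz' with rfl | rfl | rfl <;> simp
          have hWu : u ⊆ ({v, a, b, c, d, x} : Finset ℕ) := by
            rw [hus2]; intro z' hz'; simp only [Finset.mem_insert, Finset.mem_singleton] at hz' ⊢; rcases hz' with rfl | rfl | rfl <;> simp
          have hWz : z ⊆ ({v, a, b, c, d, x} : Finset ℕ) := by
            rw [hzs2]; intro z' hz'; simp only [Finset.mem_insert, Finset.mem_singleton] at hz' ⊢; rcases hz' with rfl | rfl | rfl <;> simp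
          have hW : ∀ w' ∈ ({v, a, b, c, d, x} : Finset ℕ), ∀ t ∈ K, w' ∈ t →
              t ⊆ ({v, a, b, c, d, x} : Finset ℕ) := by
            intro w' hw' t ht hwt
            simp at hw'
            rcases hw' with rfl | rfl | rfl | rfl | rfl | rfl
            · have : t ∈ ({t₁, t₂, t₃, t₄} : Finset (Finset ℕ)) :=
                hfv ▸ Finset.mem_filter.2 ⟨ht, hwt⟩
              simp at this
              rcases this with rfl | rfl | rfl | rfl
              exacts [hWt₁, hWt₂, hWt₃, hWt₄]
            · have : t ∈ ({t₁, t₄, s₁, u} : Finset (Finset ℕ)) :=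
                hfa ▸ Finset.mem_filter.2 ⟨ht, hwt⟩
              simp at this
              rcases this with rfl | rfl | rfl | rfl
              exacts [hWt₁, hWt₄, hWs₁, hWu]
            · have : t ∈ ({t₁, t₂, s₁, w} : Finset (Finset ℕ)) :=
                hfb ▸ Finset.mem_filter.2 ⟨ht, hwt⟩
              simp at this
              rcases this with rfl | rfl | rfl | rfl
              exacts [hWt₁, hWt₂, hWs₁, hWw]
            · have : t ∈ ({t₂, t₃, w, z} : Finset (Finset ℕ)) :=
                hfc ▸ Finset.mem_filter.2 ⟨ht, hwt⟩
              simp at this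
              rcases this with rfl | rfl | rfl | rfl
              exacts [hWt₂, hWt₃, hWw, hWz]
            · have : t ∈ ({t₃, t₄, u, z} : Finset (Finset ℕ)) :=
                hfd ▸ Finset.mem_filter.2 ⟨ht, hwt⟩
              simp at this
              rcases this with rfl | rfl | rfl | rfl
              exacts [hWt₃, hWt₄, hWu, hWz]
            · have : t ∈ ({s₁, w, u, z} : Finset (Finset ℕ)) :=
                hfx ▸ Finset.mem_filter.2 ⟨ht, hwt⟩
              simp at this
              rcases this with rfl | rfl | rfl | rfl
              exacts [hWs₁, hWw, hWu, hWz]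
          have hsub := vertex_closure hK ht₁K hWt₁ hW
          have h1 := Finset.card_le_card hsub
          have h2 : ({v, a, b, c, d, x} : Finset ℕ).card ≤ 6 :=
            card_le_succ (card_le_succ (card_le_succ (card_le_succ (card_le_succ (by simp)))))
          omega

section Decomp

variable {K G D : Complex} {Ds : Finset Complex} (hd : IsDecomp K G D Ds)

/-- If e is an edge of two disjoint subcomplexes of the closed surface K, it is a
boundary edge of each. -/
lemma one_side {A B : Complex} (hK : IsClosedSurface K) (hA : A ⊆ K) (hB : B ⊆ K)
    (hdisj : Disjoint A B) {e : Finset ℕ} (heA : e ∈ edges A) (heB : e ∈ edges B) :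
    e ∈ bdryEdges A := by
  rcases mem_edges.1 heA with ⟨t, htA, hte, he2⟩
  rcases mem_edges.1 heB with ⟨s, hsB, hse, _⟩
  have hsnA : s ∉ A := Finset.disjoint_right.1 hdisj hsB
  have heK : e ∈ edges K := edges_mono hA heA
  have hK2 := hK.2 e heK
  have hsub : insert s (A.filter (fun t => e ⊆ t)) ⊆ K.filter (fun t => e ⊆ t) := by
    intro u hu
    rcases Finset.mem_insert.1 hu with rfl | hu
    · exact Finset.mem_filter.2 ⟨hB hsB, hse⟩
    · rcases Finset.mem_filter.1 hu with ⟨huA, hue⟩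
      exact Finset.mem_filter.2 ⟨hA huA, hue⟩
  have hsni : s ∉ A.filter (fun t => e ⊆ t) := fun hs => hsnA (Finset.mem_filter.1 hs).1
  have hcard := Finset.card_le_card hsub
  rw [Finset.card_insert_of_notMem hsni, hK2] at hcard
  have hpos : 0 < (A.filter (fun t => e ⊆ t)).card :=
    Finset.card_pos.2 ⟨t, Finset.mem_filter.2 ⟨htA, hte⟩⟩
  exact Finset.mem_filter.2 ⟨heA, by omega⟩

include hd

lemma piece_sub {X : Complex} (hX : X ∈ insert D Ds) : X ⊆ K := by
  rcases Finset.mem_insert.1 hX with rfl | hX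
  · exact hd.subD
  · exact hd.subDs X hX

lemma piece_disc {X : Complex} (hX : X ∈ insert D Ds) : IsDisc X := by
  rcases Finset.mem_insert.1 hX with rfl | hX
  · exact hd.discD
  · exact hd.discDs X hX

lemma piece_disjG {X : Complex} (hX : X ∈ insert D Ds) : Disjoint G X := by
  rcases Finset.mem_insert.1 hX with rfl | hX
  · exact hd.disjGD
  · exact hd.disjGDs X hX

lemma piece_circleG {X : Complex} (hX : X ∈ insert D Ds) : CircleInter G X := by
  rcases Finset.mem_insert.1 hX with rfl | hX
  · exact hd.interGD
  · exact hd.interGDs X hX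

lemma piece_disj {X Y : Complex} (hX : X ∈ insert D Ds) (hY : Y ∈ insert D Ds)
    (hXY : X ≠ Y) : Disjoint X Y := by
  rcases Finset.mem_insert.1 hX with hX' | hX'
  · rcases Finset.mem_insert.1 hY with hY' | hY'
    · exact absurd (hX'.trans hY'.symm) hXY
    · exact hX' ▸ hd.disjDDs Y hY'
  · rcases Finset.mem_insert.1 hY with hY' | hY'
    · exact hY' ▸ (hd.disjDDs X hX').symm
    · exact hd.disjDsDs X hX' Y hY' hXY

lemma tri_piece {t : Finset ℕ} (ht : t ∈ K) (htG : t ∉ G) :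
    ∃ X ∈ insert D Ds, t ∈ X := by
  have := hd.cover ▸ ht
  rcases Finset.mem_union.1 this with h1 | h2
  · rcases Finset.mem_union.1 h1 with h | h
    · exact absurd h htG
    · exact ⟨D, Finset.mem_insert_self _ _, h⟩
  · rcases Finset.mem_sup.1 h2 with ⟨X, hX, htX⟩
    exact ⟨X, Finset.mem_insert_of_mem hX, htX⟩

/-- The boundary of G decomposes into the intersections with the pieces. -/
lemma bdryG_eq : bdryEdges G = (insert D Ds).biUnion (fun X => edges G ∩ edges X) := by
  ext e
  simp only [Finset.mem_biUnion, Finset.mem_inter]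
  constructor
  · intro he
    rcases Finset.mem_filter.1 he with ⟨heG, h1⟩
    have heK : e ∈ edges K := edges_mono hd.subG heG
    have hK2 := hd.closed.2 e heK
    obtain ⟨t', ht'K, ht'e, ht'G⟩ : ∃ t', t' ∈ K ∧ e ⊆ t' ∧ t' ∉ G := by
      by_contra hc; push_neg at hc
      have : K.filter (fun t => e ⊆ t) ⊆ G.filter (fun t => e ⊆ t) := by
        intro u hu
        rcases Finset.mem_filter.1 hu with ⟨huK, hue⟩
        exact Finset.mem_filter.2 ⟨hc u huK hue, hue⟩
      have := Finset.card_le_card this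
      omega
    obtain ⟨X, hX, ht'X⟩ := tri_piece hd ht'K ht'G
    exact ⟨X, hX, heG, sub_mem_edges ht'X ht'e (edges_card2 heG)⟩
  · rintro ⟨X, hX, heG, heX⟩
    exact one_side hd.closed hd.subG (piece_sub hd hX) (piece_disjG hd hX) heG heX

lemma BX_bdry {X : Complex} (hX : X ∈ insert D Ds) :
    edges G ∩ edges X ⊆ bdryEdges G := by
  rw [bdryG_eq hd]
  intro e he
  exact Finset.mem_biUnion.2 ⟨X, hX, he⟩

lemma BX_disjoint {X Y : Complex} (hX : X ∈ insert D Ds) (hY : Y ∈ insert D Ds)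
    (hXY : X ≠ Y) : Disjoint (edges G ∩ edges X) (edges G ∩ edges Y) := by
  rw [Finset.disjoint_left]
  rintro e he he'
  rcases Finset.mem_inter.1 he with ⟨heG, heX⟩
  rcases Finset.mem_inter.1 he' with ⟨_, heY⟩
  rcases mem_edges.1 heG with ⟨t, htG, hte, he2⟩
  rcases mem_edges.1 heX with ⟨s, hsX, hse, _⟩
  rcases mem_edges.1 heY with ⟨r, hrY, hre, _⟩
  have hts : t ≠ s := fun h => Finset.disjoint_left.1 (piece_disjG hd hX) (h ▸ htG) hsX
  have htr : t ≠ r := fun h => Finset.disjoint_left.1 (piece_disjG hd hY) (h ▸ htG) hrY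
  have hsr : s ≠ r := fun h => Finset.disjoint_left.1 (piece_disj hd hX hY hXY) (h ▸ hsX) hrY
  have hsub : ({t, s, r} : Finset (Finset ℕ)) ⊆ K.filter (fun u => e ⊆ u) := by
    intro u hu; simp at hu
    rcases hu with rfl | rfl | rfl
    · exact Finset.mem_filter.2 ⟨hd.subG htG, hte⟩
    · exact Finset.mem_filter.2 ⟨piece_sub hd hX hsX, hse⟩
    · exact Finset.mem_filter.2 ⟨piece_sub hd hY hrY, hre⟩
  have hcard : ({t, s, r} : Finset (Finset ℕ)).card = 3 := by
    rw [Finset.card_insert_of_notMem (by simp [hts, htr]),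
      Finset.card_insert_of_notMem (by simp [hsr]), Finset.card_singleton]
  have := Finset.card_le_card hsub
  rw [hcard, hd.closed.2 e (edges_mono hd.subG heG)] at this
  omega

/-- boundary circles of G are vertex-disjoint -/
lemma circle_verts_disjoint {X Y : Complex} (hX : X ∈ insert D Ds) (hY : Y ∈ insert D Ds)
    (hXY : X ≠ Y) (hcX : IsCircle (edges G ∩ edges X)) (hcY : IsCircle (edges G ∩ edges Y)) :
    Disjoint ((edges G ∩ edges X).biUnion id) ((edges G ∩ edges Y).biUnion id) := by
  rw [Finset.disjoint_left]
  intro w hwX hwY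
  have hdX := hcX.2.2.1 w hwX
  have hdY := hcY.2.2.1 w hwY
  obtain ⟨e₁, e₂, h12, he₁, he₂⟩ := two_of_card_two hdX
  obtain ⟨f₁, f₂, hf12, hf₁, hf₂⟩ := two_of_card_two hdY
  rcases Finset.mem_filter.1 he₁ with ⟨he₁X, hwe₁⟩
  rcases Finset.mem_filter.1 he₂ with ⟨he₂X, hwe₂⟩
  rcases Finset.mem_filter.1 hf₁ with ⟨hf₁Y, hwf₁⟩
  rcases Finset.mem_filter.1 hf₂ with ⟨hf₂Y, hwf₂⟩
  have hBdisj := BX_disjoint hd hX hY hXY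
  have hef : ∀ i ∈ ({e₁, e₂} : Finset (Finset ℕ)), ∀ j ∈ ({f₁, f₂} : Finset (Finset ℕ)), i ≠ j := by
    intro i hi j hj
    rintro rfl
    simp at hi hj
    have hiX : i ∈ edges G ∩ edges X := by rcases hi with rfl | rfl <;> assumption
    have hiY : i ∈ edges G ∩ edges Y := by rcases hj with rfl | rfl <;> assumption
    exact Finset.disjoint_left.1 hBdisj hiX hiY
  have hsub : ({e₁, e₂, f₁, f₂} : Finset (Finset ℕ)) ⊆ (bdryEdges G).filter (fun e => w ∈ e) := by
    intro u hu; simp at hu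
    rcases hu with rfl | rfl | rfl | rfl
    · exact Finset.mem_filter.2 ⟨BX_bdry hd hX he₁X, hwe₁⟩
    · exact Finset.mem_filter.2 ⟨BX_bdry hd hX he₂X, hwe₂⟩
    · exact Finset.mem_filter.2 ⟨BX_bdry hd hY hf₁Y, hwf₁⟩
    · exact Finset.mem_filter.2 ⟨BX_bdry hd hY hf₂Y, hwf₂⟩
  have h1 : e₁ ≠ f₁ := hef e₁ (by simp) f₁ (by simp)
  have h2 : e₁ ≠ f₂ := hef e₁ (by simp) f₂ (by simp)
  have h3 : e₂ ≠ f₁ := hef e₂ (by simp) f₁ (by simp)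
  have h4 : e₂ ≠ f₂ := hef e₂ (by simp) f₂ (by simp)
  have hcard : ({e₁, e₂, f₁, f₂} : Finset (Finset ℕ)).card = 4 := by
    rw [Finset.card_insert_of_notMem (by simp [h12, h1, h2]),
      Finset.card_insert_of_notMem (by simp [h3, h4]),
      Finset.card_insert_of_notMem (by simp [hf12]), Finset.card_singleton]
  have hle := bdry_at_le_two hd.surfG w
  have := Finset.card_le_card hsub
  omega

/-- G has at least one neighboring piece. -/
lemma neighbor_exists : ∃ X ∈ insert D Ds, (edges G ∩ edges X).Nonempty := by
  obtain ⟨t₀, ht₀⟩ := hd.surfG.nonempty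
  obtain ⟨s₀, hs₀⟩ := hd.discD.1.nonempty
  have hs₀G : s₀ ∉ G := Finset.disjoint_right.1 hd.disjGD hs₀
  have hchain := hd.closed.1.conn t₀ (hd.subG ht₀) s₀ (hd.subD hs₀)
  have exit : ∀ s : Finset ℕ, Relation.ReflTransGen (adj K) t₀ s → s ∉ G →
      ∃ a ∈ G, ∃ b ∈ K, b ∉ G ∧ (a ∩ b).card = 2 := by
    intro s hs
    induction hs with
    | refl => intro h; exact absurd ht₀ h
    | @tail c s' hc hR ih =>
      intro hs'G
      by_cases hcG : c ∈ G
      · exact ⟨c, hcG, s', hR.2.1, hs'G, hR.2.2⟩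
      · exact ih hcG
  obtain ⟨a, haG, b, hbK, hbG, hab⟩ := exit s₀ hchain hs₀G
  obtain ⟨X, hX, hbX⟩ := tri_piece hd hbK hbG
  refine ⟨X, hX, ⟨a ∩ b, Finset.mem_inter.2 ⟨?_, ?_⟩⟩⟩
  · exact sub_mem_edges haG Finset.inter_subset_left hab
  · exact sub_mem_edges hbX Finset.inter_subset_right hab


lemma int_not_meet {v : ℕ} (hv : v ∈ intVertices D) {A : Complex} (hAK : A ⊆ K)
    (hdisj : Disjoint D A)
    (hci : vertices D ∩ vertices A = (edges D ∩ edges A).biUnion id) :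
    v ∉ vertices A := by
  intro hvA
  rcases Finset.mem_sdiff.1 hv with ⟨hvD, hvB⟩
  have : v ∈ (edges D ∩ edges A).biUnion id := hci ▸ Finset.mem_inter.2 ⟨hvD, hvA⟩
  rcases Finset.mem_biUnion.1 this with ⟨e, he, hve⟩
  rcases Finset.mem_inter.1 he with ⟨heD, heA⟩
  exact hvB (Finset.mem_biUnion.2
    ⟨e, one_side hd.closed hd.subD hAK hdisj heD heA, hve⟩)

lemma int_not_G {v : ℕ} (hv : v ∈ intVertices D) : v ∉ vertices G := by
  refine int_not_meet hd hv hd.subG hd.disjGD.symm ?_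
  rw [Finset.inter_comm, hd.interGD.2, Finset.inter_comm (edges G)]

lemma maxv_tris {v : ℕ} (hv : v ∈ intVertices D) :
    ∀ t ∈ K, v ∈ t → t ∈ D := by
  intro t htK hvt
  by_contra htD
  by_cases htG : t ∈ G
  · exact int_not_G hd hv (mem_vertices.2 ⟨t, htG, hvt⟩)
  · have := hd.cover ▸ htK
    rcases Finset.mem_union.1 this with h1 | h2
    · rcases Finset.mem_union.1 h1 with h | h
      · exact htG h
      · exact htD h
    · rcases Finset.mem_sup.1 h2 with ⟨Di, hDi, htDi⟩
      exact int_not_meet hd hv (hd.subDs Di hDi) (hd.disjDDs Di hDi)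
        (hd.interDDs Di hDi).2 (mem_vertices.2 ⟨t, htDi, hvt⟩)

/-- The star of the interior maximal-valence vertex supplies `mv K + 1` vertices
of `D`. -/
lemma star_facts :
    ∃ S : Finset ℕ, S ⊆ vertices D ∧ mv K + 1 ≤ S.card ∧
      (∀ w ∈ S, w ∈ vertices K) ∧ ∃ v ∈ S, v ∉ vertices G := by
  obtain ⟨v, hv, hval⟩ := hd.maxv
  refine ⟨insert v (linkV K v), ?_, ?_, ?_, v, by simp, int_not_G hd hv⟩
  · intro w hw
    rcases Finset.mem_insert.1 hw with rfl | hw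
    · exact (Finset.mem_sdiff.1 hv).1
    · rcases Finset.mem_erase.1 hw with ⟨hwv, hw'⟩
      rcases Finset.mem_biUnion.1 hw' with ⟨t, ht, hwt⟩
      rcases Finset.mem_filter.1 ht with ⟨htK, hvt⟩
      exact mem_vertices.2 ⟨t, maxv_tris hd hv t htK hvt, hwt⟩
  · have h1 : v ∉ linkV K v := fun h => (Finset.mem_erase.1 h).1 rfl
    rw [Finset.card_insert_of_notMem h1]
    have := link_card_ge hd.closed v
    omega
  · intro w hw
    rcases Finset.mem_insert.1 hw with rfl | hw
    · exact vertices_mono hd.subD (Finset.mem_sdiff.1 hv).1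
    · rcases Finset.mem_erase.1 hw with ⟨hwv, hw'⟩
      rcases Finset.mem_biUnion.1 hw' with ⟨t, ht, hwt⟩
      rcases Finset.mem_filter.1 ht with ⟨htK, _⟩
      exact mem_vertices.2 ⟨t, htK, hwt⟩

lemma mv_ge_three : 3 ≤ mv K := by
  obtain ⟨v, hv, hval⟩ := hd.maxv
  have hvK : v ∈ vertices K :=
    vertices_mono hd.subD (Finset.mem_sdiff.1 hv).1
  have := valence_ge_three hd.closed hvK
  omega

/-- The main contradiction: G cannot have three neighbouring pieces. -/
lemma not_three_neighbors (hV : (vertices K).card ≤ 11) :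
    ¬ 3 ≤ ((insert D Ds).filter (fun X => (edges G ∩ edges X).Nonempty)).card := by
  classical
  intro hN3
  set N := (insert D Ds).filter (fun X => (edges G ∩ edges X).Nonempty) with hN
  have hNsub : N ⊆ insert D Ds := Finset.filter_subset _ _
  have hNcirc : ∀ X ∈ N, IsCircle (edges G ∩ edges X) := by
    intro X hX
    rcases Finset.mem_filter.1 hX with ⟨hX', hne⟩
    rcases (piece_circleG hd hX').1 with h | h
    · exact h
    · rw [h] at hne; exact absurd hne (by simp)
  have hVsub : ∀ X ∈ N, (edges G ∩ edges X).biUnion id ⊆ vertices G := by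
    intro X hX w hw
    rcases Finset.mem_biUnion.1 hw with ⟨e, he, hwe⟩
    exact edge_vertices_sub (Finset.mem_inter.1 he).1 hwe
  have hdisjV : ∀ X ∈ N, ∀ Y ∈ N, X ≠ Y →
      Disjoint ((edges G ∩ edges X).biUnion id) ((edges G ∩ edges Y).biUnion id) :=
    fun X hX Y hY hXY => circle_verts_disjoint hd (hNsub hX) (hNsub hY) hXY
      (hNcirc X hX) (hNcirc Y hY)
  obtain ⟨S, hSD, hScard, hSK, v, hvS, hvG⟩ := star_facts hd
  have hVGK : vertices G ⊆ vertices K := vertices_mono hd.subG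
  have hUb : (vertices G).card + (S \ vertices G).card ≤ 11 := by
    have hsub : vertices G ∪ (S \ vertices G) ⊆ vertices K := by
      intro w hw
      rcases Finset.mem_union.1 hw with hw | hw
      · exact hVGK hw
      · exact hSK w (Finset.mem_sdiff.1 hw).1
    have := Finset.card_le_card hsub
    rw [Finset.card_union_of_disjoint Finset.disjoint_sdiff] at this
    omega
  have hxv : 1 ≤ (S \ vertices G).card :=
    Finset.card_pos.2 ⟨v, Finset.mem_sdiff.2 ⟨hvS, hvG⟩⟩
  have hSsplit : (S \ vertices G).card + (S ∩ vertices G).card = S.card :=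
    Finset.card_sdiff_add_card_inter S (vertices G)
  by_cases hDN : D ∈ N
  · -- D and two other neighbours
    have hN' : 1 < (N.erase D).card := by
      rw [Finset.card_erase_of_mem hDN]; omega
    obtain ⟨Y, hY, Z, hZ, hYZ⟩ := Finset.one_lt_card.1 hN'
    rcases Finset.mem_erase.1 hY with ⟨hYD, hYN⟩
    rcases Finset.mem_erase.1 hZ with ⟨hZD, hZN⟩
    have h3D := circle_three_verts (hNcirc D hDN)
    have h3Y := circle_three_verts (hNcirc Y hYN)
    have h3Z := circle_three_verts (hNcirc Z hZN)
    have d1 : Disjoint ((edges G ∩ edges Y).biUnion id) ((edges G ∩ edges Z).biUnion id) :=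
      hdisjV Y hYN Z hZN hYZ
    have d2 : Disjoint ((edges G ∩ edges D).biUnion id)
        (((edges G ∩ edges Y).biUnion id) ∪ ((edges G ∩ edges Z).biUnion id)) :=
      Finset.disjoint_union_right.2
        ⟨hdisjV D hDN Y hYN (Ne.symm hYD), hdisjV D hDN Z hZN (Ne.symm hZD)⟩
    have hsubG : ((edges G ∩ edges D).biUnion id) ∪
        (((edges G ∩ edges Y).biUnion id) ∪ ((edges G ∩ edges Z).biUnion id)) ⊆ vertices G := by
      intro w hw
      rcases Finset.mem_union.1 hw with hw | hw
      · exact hVsub D hDN hw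
      rcases Finset.mem_union.1 hw with hw | hw
      · exact hVsub Y hYN hw
      · exact hVsub Z hZN hw
    have hG6 : ((edges G ∩ edges D).biUnion id).card + 6 ≤ (vertices G).card := by
      have := Finset.card_le_card hsubG
      rw [Finset.card_union_of_disjoint d2, Finset.card_union_of_disjoint d1] at this
      omega
    have hSVG : S ∩ vertices G ⊆ (edges G ∩ edges D).biUnion id := by
      intro w hw
      rcases Finset.mem_inter.1 hw with ⟨hwS, hwG⟩
      have : w ∈ vertices G ∩ vertices D := Finset.mem_inter.2 ⟨hwG, hSD hwS⟩
      rw [hd.interGD.2] at this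
      exact this
    have hSVGc := Finset.card_le_card hSVG
    rcases le_or_gt 5 (mv K) with hmv | hmv
    · omega
    · have hcl := classify_le6 hd.closed (by omega)
      have := Finset.card_le_card hVGK
      omega
  · -- three neighbours among the discs Di; D itself does not meet G
    have hED : edges G ∩ edges D = ∅ := by
      by_contra hne
      exact hDN (Finset.mem_filter.2 ⟨Finset.mem_insert_self _ _,
        Finset.nonempty_iff_ne_empty.2 hne⟩)
    have hVGD : vertices G ∩ vertices D = ∅ := by
      rw [hd.interGD.2, hED]; simp
    obtain ⟨T, hTN, hT3⟩ := Finset.exists_subset_card_eq (s := N) (n := 3) hN3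
    obtain ⟨X, Y, Z, hXY, hXZ, hYZ, hT⟩ := Finset.card_eq_three.1 hT3
    have hXN : X ∈ N := hTN (hT ▸ (by simp))
    have hYN : Y ∈ N := hTN (hT ▸ (by simp))
    have hZN : Z ∈ N := hTN (hT ▸ (by simp))
    have h3X := circle_three_verts (hNcirc X hXN)
    have h3Y := circle_three_verts (hNcirc Y hYN)
    have h3Z := circle_three_verts (hNcirc Z hZN)
    have d1 : Disjoint ((edges G ∩ edges Y).biUnion id) ((edges G ∩ edges Z).biUnion id) :=
      hdisjV Y hYN Z hZN hYZ
    have d2 : Disjoint ((edges G ∩ edges X).biUnion id)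
        (((edges G ∩ edges Y).biUnion id) ∪ ((edges G ∩ edges Z).biUnion id)) :=
      Finset.disjoint_union_right.2 ⟨hdisjV X hXN Y hYN hXY, hdisjV X hXN Z hZN hXZ⟩
    have hsubG : ((edges G ∩ edges X).biUnion id) ∪
        (((edges G ∩ edges Y).biUnion id) ∪ ((edges G ∩ edges Z).biUnion id)) ⊆ vertices G := by
      intro w hw
      rcases Finset.mem_union.1 hw with hw | hw
      · exact hVsub X hXN hw
      rcases Finset.mem_union.1 hw with hw | hw
      · exact hVsub Y hYN hw
      · exact hVsub Z hZN hw
    have hG9 : 9 ≤ (vertices G).card := by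
      have := Finset.card_le_card hsubG
      rw [Finset.card_union_of_disjoint d2, Finset.card_union_of_disjoint d1] at this
      omega
    have hSVG : S ∩ vertices G = ∅ := by
      rw [← Finset.subset_empty]
      intro w hw
      rcases Finset.mem_inter.1 hw with ⟨hwS, hwG⟩
      rw [← hVGD]
      exact Finset.mem_inter.2 ⟨hwG, hSD hwS⟩
    have hmv3 := mv_ge_three hd
    rw [hSVG] at hSsplit
    simp at hSsplit
    omega

end Decomp



/-- if V(T) ≤ 11, a minimal genus-surface has 1 or 2 boundary
components. -/
theorem boundary_components_one_or_two (K G D : Complex) (Ds : Finset Complex)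
    (hV : (vertices K).card ≤ 11) (h : IsMinDecomp K G D Ds) :
    IsCircle (bdryEdges G) ∨
      ∃ C₁ C₂ : Complex, C₁ ∪ C₂ = bdryEdges G ∧ Disjoint C₁ C₂ ∧
        IsCircle C₁ ∧ IsCircle C₂ := by
  classical
  obtain ⟨hd, -⟩ := h
  set N := (insert D Ds).filter (fun X => (edges G ∩ edges X).Nonempty) with hN
  have hNsub : N ⊆ insert D Ds := Finset.filter_subset _ _
  have hNcirc : ∀ X ∈ N, IsCircle (edges G ∩ edges X) := by
    intro X hX
    rcases Finset.mem_filter.1 hX with ⟨hX', hne⟩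
    rcases (piece_circleG hd hX').1 with h | h
    · exact h
    · rw [h] at hne; exact absurd hne (by simp)
  have hbdry : bdryEdges G = N.biUnion (fun X => edges G ∩ edges X) := by
    rw [bdryG_eq hd]
    ext e
    simp only [Finset.mem_biUnion]
    constructor
    · rintro ⟨X, hX, he⟩
      exact ⟨X, Finset.mem_filter.2 ⟨hX, ⟨e, he⟩⟩, he⟩
    · rintro ⟨X, hX, he⟩
      exact ⟨X, (Finset.mem_filter.1 hX).1, he⟩
  have hN1 : 1 ≤ N.card := by
    obtain ⟨X, hX, hne⟩ := neighbor_exists hd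
    exact Finset.card_pos.2 ⟨X, Finset.mem_filter.2 ⟨hX, hne⟩⟩
  have hN2 : N.card ≤ 2 := by
    have := not_three_neighbors hd hV
    rw [← hN] at this
    omega
  rcases (by omega : N.card = 1 ∨ N.card = 2) with h1 | h2
  · obtain ⟨X, hX⟩ := Finset.card_eq_one.1 h1
    left
    have hXN : X ∈ N := hX ▸ (by simp)
    rw [hbdry, hX, Finset.singleton_biUnion]
    exact hNcirc X hXN
  · obtain ⟨X, Y, hXY, hXYeq⟩ := Finset.card_eq_two.1 h2
    right
    have hXN : X ∈ N := hXYeq ▸ (by simp)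
    have hYN : Y ∈ N := hXYeq ▸ (by simp)
    refine ⟨edges G ∩ edges X, edges G ∩ edges Y, ?_, ?_, hNcirc X hXN, hNcirc Y hYN⟩
    · rw [hbdry, hXYeq, Finset.biUnion_insert, Finset.singleton_biUnion]
    · exact BX_disjoint hd (hNsub hXN) (hNsub hYN) hXY


end Tri
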